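/- Let g be an egalitarian Boolean function on the k-slice of a 3k-element set with p = P_{x∼U(S)}(g(x)=1). Then P_{(x₁,x₂,x₃)}(g(x₁)=g(x₂)=g(x₃)) ≥ (8 − 27p + 27p²)/8, where (x₁,x₂,x₃) is uniform over ordered partitions of V into three k-sets. In particular this probability is always at least 5/32. -/

import Mathlib

variable {α : Type*} [DecidableEq α]

/-- The `k`-slice of `V`. -/
def kslice (V : Finset α) (k : ℕ) : Finset (Finset α) :=
  V.powerset.filter (fun x => x.card = k)

/-- Ordered partitions of `V` into three parts of sizes `a`, `b`, `c`. -/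
def triples (V : Finset α) (a b c : ℕ) : Finset (Finset α × Finset α × Finset α) :=
  (V.powerset ×ˢ V.powerset ×ˢ V.powerset).filter
    (fun p => p.1.card = a ∧ p.2.1.card = b ∧ p.2.2.card = c ∧
      Disjoint p.1 p.2.1 ∧ Disjoint p.1 p.2.2 ∧ Disjoint p.2.1 p.2.2 ∧
      p.1 ∪ p.2.1 ∪ p.2.2 = V)

/-- Egalitarian Boolean function on the `k`-slice: the conditional probability that
`g(x) = 1` given `i ∈ x` is independent of `i ∈ V`. -/
def Egalitarian (V : Finset α) (k : ℕ) (g : Finset α → Bool) : Prop :=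
  ∀ i ∈ V, ∀ j ∈ V,
    ((kslice V k).filter (fun x => i ∈ x ∧ g x = true)).card
      = ((kslice V k).filter (fun x => j ∈ x ∧ g x = true)).card

namespace Slice

lemma mem_kslice {V : Finset α} {m : ℕ} {x : Finset α} :
    x ∈ kslice V m ↔ x ⊆ V ∧ x.card = m := by
  simp [kslice, Finset.mem_filter, Finset.mem_powerset]

lemma card_kslice (s : Finset α) (m : ℕ) : (kslice s m).card = s.card.choose m := by
  rw [kslice, ← Finset.powersetCard_eq_filter, Finset.card_powersetCard]

def up (a : Finset α → ℚ) : Finset α → ℚ := fun x => ∑ i ∈ x, a (x.erase i)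

def dn (V : Finset α) (a : Finset α → ℚ) : Finset α → ℚ :=
  fun x => ∑ i ∈ V \ x, a (insert i x)

def ip (V : Finset α) (m : ℕ) (a b : Finset α → ℚ) : ℚ :=
  ∑ x ∈ kslice V m, a x * b x

def IsHarm (V : Finset α) (j : ℕ) (h : Finset α → ℚ) : Prop :=
  ∀ w ∈ V.powerset, w.card + 1 = j → dn V h w = 0

variable {V : Finset α}

lemma erase_mem_kslice {m : ℕ} {x : Finset α} (hx : x ∈ kslice V (m+1)) {i : α}
    (hi : i ∈ x) : x.erase i ∈ kslice V m := by
  rw [mem_kslice] at hx ⊢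
  exact ⟨(Finset.erase_subset _ _).trans hx.1, by rw [Finset.card_erase_of_mem hi]; omega⟩

lemma insert_mem_kslice {m : ℕ} {y : Finset α} (hy : y ∈ kslice V m) {i : α}
    (hi : i ∈ V \ y) : insert i y ∈ kslice V (m+1) := by
  rw [Finset.mem_sdiff] at hi
  rw [mem_kslice] at hy ⊢
  exact ⟨Finset.insert_subset hi.1 hy.1, by rw [Finset.card_insert_of_notMem hi.2, hy.2]⟩

lemma up_congr {a b : Finset α → ℚ} {m s : ℕ}
    (hab : ∀ y ∈ kslice V m, a y = b y) :
    ∀ x ∈ kslice V (m + s), up^[s] a x = up^[s] b x := by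
  induction s with
  | zero => exact hab
  | succ s ih =>
    intro x hx
    rw [Function.iterate_succ_apply', Function.iterate_succ_apply']
    exact Finset.sum_congr rfl fun i hi => ih _ (erase_mem_kslice hx hi)

lemma dn_congr {a b : Finset α → ℚ} {m s : ℕ}
    (hab : ∀ y ∈ kslice V (m + s), a y = b y) :
    ∀ x ∈ kslice V m, (dn V)^[s] a x = (dn V)^[s] b x := by
  induction s generalizing a b m with
  | zero => exact hab
  | succ s ih =>
    intro x hx
    rw [Function.iterate_succ_apply, Function.iterate_succ_apply]
    refine ih (m := m) (fun y hy => ?_) x hx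
    exact Finset.sum_congr rfl fun i hi => hab _ (insert_mem_kslice hy hi)

lemma up_zero : up (0 : Finset α → ℚ) = 0 := by
  funext x; simp [up]

lemma dn_zero : dn V (0 : Finset α → ℚ) = 0 := by
  funext x; simp [dn]

lemma up_iter_zero (s : ℕ) : up^[s] (0 : Finset α → ℚ) = 0 :=
  Function.iterate_fixed up_zero s

lemma dn_iter_zero (s : ℕ) : (dn V)^[s] (0 : Finset α → ℚ) = 0 :=
  Function.iterate_fixed dn_zero s

lemma up_smul (c : ℚ) (a : Finset α → ℚ) : up (c • a) = c • up a := by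
  funext x; simp [up, Finset.mul_sum]

lemma dn_smul (c : ℚ) (a : Finset α → ℚ) : dn V (c • a) = c • dn V a := by
  funext x; simp [dn, Finset.mul_sum]

lemma up_add (a b : Finset α → ℚ) : up (a + b) = up a + up b := by
  funext x; simp [up, Finset.sum_add_distrib]

lemma dn_add (a b : Finset α → ℚ) : dn V (a + b) = dn V a + dn V b := by
  funext x; simp [dn, Finset.sum_add_distrib]

lemma up_iter_smul (s : ℕ) (c : ℚ) (a : Finset α → ℚ) :
    up^[s] (c • a) = c • up^[s] a := by
  induction s with
  | zero => rfl
  | succ s ih => rw [Function.iterate_succ_apply', Function.iterate_succ_apply', ih, up_smul]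

lemma dn_iter_smul (s : ℕ) (c : ℚ) (a : Finset α → ℚ) :
    (dn V)^[s] (c • a) = c • (dn V)^[s] a := by
  induction s with
  | zero => rfl
  | succ s ih => rw [Function.iterate_succ_apply', Function.iterate_succ_apply', ih, dn_smul]

lemma ip_comm (m : ℕ) (a b : Finset α → ℚ) : ip V m a b = ip V m b a := by
  unfold ip; exact Finset.sum_congr rfl fun x _ => mul_comm _ _

lemma ip_up_dn (m : ℕ) (a b : Finset α → ℚ) :
    ip V (m+1) (up a) b = ip V m a (dn V b) := by
  unfold ip up dn
  simp only [Finset.sum_mul, Finset.mul_sum]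
  rw [Finset.sum_sigma', Finset.sum_sigma']
  refine Finset.sum_nbij' (fun q => ⟨q.1.erase q.2, q.2⟩) (fun q => ⟨insert q.2 q.1, q.2⟩)
    ?_ ?_ ?_ ?_ ?_
  · rintro ⟨x, i⟩ hq
    rw [Finset.mem_sigma] at hq ⊢
    obtain ⟨hx, hi⟩ := hq
    refine ⟨erase_mem_kslice hx hi, ?_⟩
    rw [Finset.mem_sdiff]
    exact ⟨(mem_kslice.1 hx).1 hi, Finset.notMem_erase _ _⟩
  · rintro ⟨y, i⟩ hq
    rw [Finset.mem_sigma] at hq ⊢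
    obtain ⟨hy, hi⟩ := hq
    exact ⟨insert_mem_kslice hy hi, Finset.mem_insert_self _ _⟩
  · rintro ⟨x, i⟩ hq
    rw [Finset.mem_sigma] at hq
    simp only [Sigma.mk.inj_iff, heq_eq_eq, and_true]
    exact Finset.insert_erase hq.2
  · rintro ⟨y, i⟩ hq
    rw [Finset.mem_sigma] at hq
    simp only [Sigma.mk.inj_iff, heq_eq_eq, and_true]
    exact Finset.erase_insert (Finset.mem_sdiff.1 hq.2).2
  · rintro ⟨x, i⟩ hq
    rw [Finset.mem_sigma] at hq
    simp only []
    rw [Finset.insert_erase hq.2]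

lemma ip_up_dn_iter (s m : ℕ) (a b : Finset α → ℚ) :
    ip V (m+s) (up^[s] a) b = ip V m a ((dn V)^[s] b) := by
  induction s generalizing b with
  | zero => rfl
  | succ s ih =>
    have h1 : m + (s+1) = (m + s) + 1 := rfl
    rw [h1, Function.iterate_succ_apply' up, ip_up_dn, ih, Function.iterate_succ_apply]

lemma dn_up_comm (a : Finset α → ℚ) {x : Finset α} (hx : x ⊆ V) :
    dn V (up a) x = up (dn V a) x + ((V.card : ℚ) - 2 * x.card) * a x := by
  have key1 : dn V (up a) x
      = ∑ i ∈ V \ x, (a x + ∑ j ∈ x, a (insert i (x.erase j))) := by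
    refine Finset.sum_congr rfl fun i hi => ?_
    rw [Finset.mem_sdiff] at hi
    show ∑ j ∈ insert i x, a ((insert i x).erase j) = _
    rw [Finset.sum_insert hi.2, Finset.erase_insert hi.2]
    congr 1
    refine Finset.sum_congr rfl fun j hj => ?_
    have hne : j ≠ i := fun hji => hi.2 (hji ▸ hj)
    rw [Finset.erase_insert_of_ne hne.symm]
  have key2 : up (dn V a) x
      = ∑ j ∈ x, (a x + ∑ i ∈ V \ x, a (insert i (x.erase j))) := by
    refine Finset.sum_congr rfl fun j hj => ?_
    have hVx : V \ x.erase j = insert j (V \ x) := by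
      ext i
      by_cases hij : i = j
      · subst hij
        simp [Finset.mem_sdiff, hx hj, Finset.notMem_erase]
      · simp [Finset.mem_sdiff, Finset.mem_erase, Finset.mem_insert, hij]
    show ∑ i ∈ V \ x.erase j, a (insert i (x.erase j)) = _
    rw [hVx, Finset.sum_insert (by simp [Finset.mem_sdiff, hj]),
      Finset.insert_erase hj]
  have hcard : ((V \ x).card : ℚ) = (V.card : ℚ) - x.card := by
    rw [Finset.card_sdiff_of_subset hx, Nat.cast_sub (Finset.card_le_card hx)]
  rw [key1, key2, Finset.sum_add_distrib, Finset.sum_add_distrib,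
    Finset.sum_const, Finset.sum_const, Finset.sum_comm, nsmul_eq_mul, nsmul_eq_mul, hcard]
  ring

def βcoef (V : Finset α) (j : ℕ) : ℕ → ℕ → ℚ
  | 0, _ => 1
  | s+1, t => (((s:ℚ)+t+1) * ((V.card : ℚ) - 2*j - s - t)) * βcoef V j s t

lemma dn_up_harm {j : ℕ} {h : Finset α → ℚ} (hh : IsHarm V j h) (r : ℕ) :
    ∀ x ∈ kslice V (j + r),
    dn V (up^[r+1] h) x = ((r:ℚ)+1) * ((V.card : ℚ) - 2*j - r) * (up^[r] h) x := by
  induction r with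
  | zero =>
    intro x hx
    rw [Function.iterate_one, Function.iterate_zero_apply]
    rw [dn_up_comm _ (mem_kslice.1 hx).1]
    have hup : up (dn V h) x = 0 := by
      refine Finset.sum_eq_zero fun i hi => ?_
      refine hh _ (Finset.mem_powerset.2 ((Finset.erase_subset _ _).trans (mem_kslice.1 hx).1)) ?_
      have hxc : x.card = j := by simpa using (mem_kslice.1 hx).2
      have : 0 < x.card := Finset.card_pos.2 ⟨i, hi⟩
      rw [Finset.card_erase_of_mem hi]
      omega
    rw [hup]
    have hxc : x.card = j := by simpa using (mem_kslice.1 hx).2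
    rw [hxc]
    push_cast
    ring
  | succ r ih =>
    intro x hx
    rw [Function.iterate_succ_apply' up (r+1), dn_up_comm _ (mem_kslice.1 hx).1]
    have hup : up (dn V (up^[r+1] h)) x
        = ((r:ℚ)+1) * ((V.card : ℚ) - 2*j - r) * up^[r+1] h x := by
      have : up (dn V (up^[r+1] h)) x
          = ∑ i ∈ x, (((r:ℚ)+1) * ((V.card : ℚ) - 2*j - r) * up^[r] h (x.erase i)) := by
        refine Finset.sum_congr rfl fun i hi => ?_
        exact ih _ (erase_mem_kslice hx hi)
      rw [this, ← Finset.mul_sum, Function.iterate_succ_apply' up r]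
      rfl
    rw [hup]
    have hxc : x.card = j + (r+1) := (mem_kslice.1 hx).2
    rw [hxc]
    push_cast
    ring

lemma dn_iter_up_harm {j : ℕ} {h : Finset α → ℚ} (hh : IsHarm V j h) (s t : ℕ) :
    ∀ x ∈ kslice V (j + t),
    (dn V)^[s] (up^[s+t] h) x = βcoef V j s t * up^[t] h x := by
  induction s with
  | zero =>
    intro x hx
    simp [βcoef]
  | succ s ih =>
    intro x hx
    rw [Function.iterate_succ_apply (dn V) s]
    have hc : βcoef V j (s+1) t
        = (((s:ℚ)+t+1) * ((V.card : ℚ) - 2*j - s - t)) * βcoef V j s t := rfl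
    have hcong : ∀ y ∈ kslice V ((j+t) + s),
        dn V (up^[s+1+t] h) y
          = (((((s:ℚ)+t+1) * ((V.card : ℚ) - 2*j - s - t))) • up^[s+t] h) y := by
      intro y hy
      have hy' : y ∈ kslice V (j + (s+t)) := by
        rwa [show j + (s+t) = (j+t)+s by omega]
      have h2 := dn_up_harm hh (s+t) y hy'
      rw [show s+1+t = (s+t)+1 by omega, h2, Pi.smul_apply, smul_eq_mul]
      push_cast
      ring
    rw [dn_congr hcong x hx, dn_iter_smul, Pi.smul_apply, smul_eq_mul, ih x hx, hc]
    ring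

lemma dn_iter_harm_zero {j : ℕ} {h : Finset α → ℚ} (hh : IsHarm V j h) {e : ℕ}
    (he : 1 ≤ e) (hej : e ≤ j) :
    ∀ w ∈ kslice V (j - e), (dn V)^[e] h w = 0 := by
  obtain ⟨e', rfl⟩ : ∃ e', e = e' + 1 := ⟨e - 1, by omega⟩
  intro w hw
  rw [Function.iterate_succ_apply]
  have hcong : ∀ y ∈ kslice V ((j - (e'+1)) + e'), dn V h y = (0 : Finset α → ℚ) y := by
    intro y hy
    have hyc : y.card + 1 = j := by
      have := (mem_kslice.1 hy).2; omega
    simpa using hh y (Finset.mem_powerset.2 (mem_kslice.1 hy).1) hyc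
  rw [dn_congr hcong w hw, dn_iter_zero]
  rfl

lemma βcoef_pos {j s t : ℕ} (hst : 2*j + s + t ≤ V.card) : 0 < βcoef V j s t := by
  induction s with
  | zero => norm_num [βcoef]
  | succ s ih =>
    have h1 : (0:ℚ) < (s:ℚ)+t+1 := by positivity
    have h2 : (0:ℚ) < (V.card : ℚ) - 2*j - s - t := by
      have h3 : (2*j + s + t : ℕ) < V.card := by omega
      have h4 := (Nat.cast_lt (α := ℚ)).2 h3
      push_cast at h4
      linarith
    have h3 := ih (by omega)
    show 0 < (((s:ℚ)+t+1) * ((V.card : ℚ) - 2*j - s - t)) * βcoef V j s t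
    positivity

lemma βcoef_eq {j s t : ℕ} (hst : 2*j + s + t ≤ V.card) :
    βcoef V j s t * (t.factorial : ℚ) * ((V.card - 2*j - t - s).factorial : ℚ)
      = (((s+t).factorial : ℕ) : ℚ) * (((V.card - 2*j - t).factorial : ℕ) : ℚ) := by
  induction s with
  | zero =>
    show (1:ℚ) * _ * _ = _
    rw [one_mul, Nat.sub_zero, Nat.zero_add]
  | succ s ih =>
    have ih' := ih (by omega)
    have hsplit : V.card - 2*j - t - s = (V.card - 2*j - t - (s+1)) + 1 := by omega
    have hcast : ((V.card - 2*j - t - s : ℕ) : ℚ) = (V.card : ℚ) - 2*j - s - t := by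
      rw [Nat.cast_sub (by omega), Nat.cast_sub (by omega), Nat.cast_sub (by omega)]
      push_cast; ring
    have hfac : ((V.card - 2*j - t - s).factorial : ℚ)
        = ((V.card - 2*j - t - s : ℕ) : ℚ) * ((V.card - 2*j - t - (s+1)).factorial : ℚ) := by
      rw [hsplit, Nat.factorial_succ]
      push_cast
      ring
    have key : ((V.card : ℚ) - 2*j - s - t) * ((V.card - 2*j - t - (s+1)).factorial : ℚ)
        = ((V.card - 2*j - t - s).factorial : ℚ) := by
      rw [hfac, hcast]
    have hβ : βcoef V j (s+1) t
        = (((s:ℚ)+t+1) * ((V.card : ℚ) - 2*j - s - t)) * βcoef V j s t := rfl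
    have hfacsucc : (((s+1+t).factorial : ℕ) : ℚ)
        = ((s:ℚ)+t+1) * (((s+t).factorial : ℕ) : ℚ) := by
      rw [show s+1+t = (s+t)+1 by omega, Nat.factorial_succ]
      push_cast; ring
    rw [hβ, hfacsucc]
    calc (((s:ℚ)+t+1) * ((V.card : ℚ) - 2*j - s - t)) * βcoef V j s t * (t.factorial : ℚ)
          * ((V.card - 2*j - t - (s+1)).factorial : ℚ)
        = ((s:ℚ)+t+1) * (βcoef V j s t * (t.factorial:ℚ)
            * (((V.card : ℚ) - 2*j - s - t) * ((V.card - 2*j - t - (s+1)).factorial : ℚ))) := by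
          ring
      _ = ((s:ℚ)+t+1) * (βcoef V j s t * (t.factorial:ℚ)
            * ((V.card - 2*j - t - s).factorial : ℚ)) := by rw [key]
      _ = ((s:ℚ)+t+1) * ((((s+t).factorial : ℕ):ℚ) * (((V.card - 2*j - t).factorial : ℕ):ℚ)) := by
          rw [← ih']
      _ = _ := by ring

lemma up_iter_eq (r : ℕ) :
    ∀ (c : Finset α → ℚ) (s : ℕ) (x : Finset α), x.card = s + r →
    up^[r] c x = (r.factorial : ℚ) * ∑ w ∈ x.powersetCard s, c w := by
  induction r with
  | zero =>
    intro c s x hx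
    rw [Function.iterate_zero_apply, Nat.factorial_zero]
    rw [show s = x.card by omega, Finset.powersetCard_self, Finset.sum_singleton]
    norm_num
  | succ r ih =>
    intro c s x hx
    rw [Function.iterate_succ_apply, ih (up c) (s+1) x (by omega)]
    have key : ∑ w ∈ x.powersetCard (s+1), up c w
        = ∑ v ∈ x.powersetCard s, (((x \ v).card : ℕ) : ℚ) * c v := by
      have h2 : ∀ v ∈ x.powersetCard s, (((x \ v).card : ℕ) : ℚ) * c v = ∑ _i ∈ x \ v, c v := by
        intro v _; rw [Finset.sum_const, nsmul_eq_mul]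
      rw [Finset.sum_congr rfl h2]
      unfold up
      rw [Finset.sum_sigma', Finset.sum_sigma']
      refine Finset.sum_nbij' (fun q => ⟨q.1.erase q.2, q.2⟩) (fun q => ⟨insert q.2 q.1, q.2⟩)
        ?_ ?_ ?_ ?_ ?_
      · rintro ⟨w, i⟩ hq
        rw [Finset.mem_sigma] at hq ⊢
        obtain ⟨hw, hi⟩ := hq
        rw [Finset.mem_powersetCard] at hw ⊢
        refine ⟨⟨(Finset.erase_subset _ _).trans hw.1, by rw [Finset.card_erase_of_mem hi]; omega⟩, ?_⟩
        rw [Finset.mem_sdiff]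
        exact ⟨hw.1 hi, Finset.notMem_erase _ _⟩
      · rintro ⟨v, i⟩ hq
        rw [Finset.mem_sigma] at hq ⊢
        obtain ⟨hv, hi⟩ := hq
        rw [Finset.mem_powersetCard] at hv ⊢
        rw [Finset.mem_sdiff] at hi
        refine ⟨⟨Finset.insert_subset hi.1 hv.1, ?_⟩, Finset.mem_insert_self _ _⟩
        rw [Finset.card_insert_of_notMem hi.2]; omega
      · rintro ⟨w, i⟩ hq
        rw [Finset.mem_sigma] at hq
        simp only [Sigma.mk.inj_iff, heq_eq_eq, and_true]
        exact Finset.insert_erase hq.2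
      · rintro ⟨v, i⟩ hq
        rw [Finset.mem_sigma] at hq
        simp only [Sigma.mk.inj_iff, heq_eq_eq, and_true]
        exact Finset.erase_insert (Finset.mem_sdiff.1 hq.2).2
      · rintro ⟨w, i⟩ _
        rfl
    rw [key]
    have hcard : ∀ v ∈ x.powersetCard s, (((x \ v).card : ℕ) : ℚ) * c v = ((r:ℚ)+1) * c v := by
      intro v hv
      rw [Finset.mem_powersetCard] at hv
      rw [Finset.card_sdiff_of_subset hv.1, hv.2, hx, show s + (r+1) - s = r+1 from by omega]
      push_cast
      ring
    rw [Finset.sum_congr rfl hcard, ← Finset.mul_sum, Nat.factorial_succ]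
    push_cast
    ring

lemma dn_iter_eq (r : ℕ) :
    ∀ (c : Finset α → ℚ) (w : Finset α),
    (dn V)^[r] c w = (r.factorial : ℚ) * ∑ z ∈ (V \ w).powersetCard r, c (w ∪ z) := by
  induction r with
  | zero =>
    intro c w
    simp [Finset.powersetCard_zero]
  | succ r ih =>
    intro c w
    rw [Function.iterate_succ_apply, ih (dn V c) w]
    have key : ∑ z ∈ (V \ w).powersetCard r, dn V c (w ∪ z)
        = ∑ z ∈ (V \ w).powersetCard (r+1), ((z.card : ℕ) : ℚ) * c (w ∪ z) := by
      have h2 : ∀ z ∈ (V \ w).powersetCard (r+1), ((z.card : ℕ) : ℚ) * c (w ∪ z)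
          = ∑ _i ∈ z, c (w ∪ z) := by
        intro z _; rw [Finset.sum_const, nsmul_eq_mul]
      rw [Finset.sum_congr rfl h2]
      unfold dn
      rw [Finset.sum_sigma', Finset.sum_sigma']
      refine Finset.sum_nbij' (fun q => ⟨insert q.2 q.1, q.2⟩) (fun q => ⟨q.1.erase q.2, q.2⟩)
        ?_ ?_ ?_ ?_ ?_
      · rintro ⟨z, i⟩ hq
        rw [Finset.mem_sigma] at hq ⊢
        obtain ⟨hz, hi⟩ := hq
        rw [Finset.mem_powersetCard] at hz ⊢
        rw [Finset.mem_sdiff] at hi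
        have hiz : i ∉ z := fun hiz => hi.2 (Finset.mem_union_right _ hiz)
        have hiw : i ∉ w := fun hiw => hi.2 (Finset.mem_union_left _ hiw)
        have h5 := hz.2
        refine ⟨⟨Finset.insert_subset (Finset.mem_sdiff.2 ⟨hi.1, hiw⟩) hz.1, ?_⟩,
          Finset.mem_insert_self _ _⟩
        rw [Finset.card_insert_of_notMem hiz, h5]
      · rintro ⟨z, i⟩ hq
        rw [Finset.mem_sigma] at hq ⊢
        obtain ⟨hz, hi⟩ := hq
        rw [Finset.mem_powersetCard] at hz ⊢
        have hiV : i ∈ V := (Finset.mem_sdiff.1 (hz.1 hi)).1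
        have hiw : i ∉ w := (Finset.mem_sdiff.1 (hz.1 hi)).2
        have h5 := hz.2
        refine ⟨⟨(Finset.erase_subset _ _).trans hz.1, by rw [Finset.card_erase_of_mem hi]; omega⟩, ?_⟩
        rw [Finset.mem_sdiff]
        refine ⟨hiV, fun hmem => ?_⟩
        rcases Finset.mem_union.1 hmem with h | h
        · exact hiw h
        · exact Finset.notMem_erase _ _ h
      · rintro ⟨z, i⟩ hq
        rw [Finset.mem_sigma] at hq
        simp only [Sigma.mk.inj_iff, heq_eq_eq, and_true]
        exact Finset.erase_insert (fun hiz => (Finset.mem_sdiff.1 hq.2).2 (Finset.mem_union_right _ hiz))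
      · rintro ⟨z, i⟩ hq
        rw [Finset.mem_sigma] at hq
        simp only [Sigma.mk.inj_iff, heq_eq_eq, and_true]
        exact Finset.insert_erase hq.2
      · rintro ⟨z, i⟩ hq
        rw [Finset.mem_sigma] at hq
        have : insert i (w ∪ z) = w ∪ insert i z := (Finset.union_insert _ _ _).symm
        rw [this]
    rw [key]
    have hcard : ∀ z ∈ (V \ w).powersetCard (r+1), ((z.card : ℕ) : ℚ) * c (w ∪ z)
        = ((r:ℚ)+1) * c (w ∪ z) := by
      intro z hz
      rw [Finset.mem_powersetCard] at hz
      rw [hz.2]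
      push_cast
      ring
    rw [Finset.sum_congr rfl hcard, ← Finset.mul_sum, Nat.factorial_succ]
    push_cast
    ring

def A0 (V : Finset α) (k : ℕ) (b : Finset α → ℚ) : Finset α → ℚ :=
  fun x => ∑ y ∈ kslice (V \ x) k, b y

lemma sum_union_split (k m : ℕ) (hm : m ≤ k) (b : Finset α → ℚ) {x : Finset α}
    (hx : x ∈ kslice V k) :
    ∑ w ∈ x.powersetCard m, ∑ z ∈ (V \ w).powersetCard (k - m), b (w ∪ z)
      = ∑ y ∈ kslice V k, (((x ∩ y).card.choose m : ℕ) : ℚ) * b y := by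
  obtain ⟨hxV, hxc⟩ := mem_kslice.1 hx
  have hRHS : ∀ y ∈ kslice V k, (((x ∩ y).card.choose m : ℕ) : ℚ) * b y
      = ∑ _w ∈ (x ∩ y).powersetCard m, b y := by
    intro y _
    rw [Finset.sum_const, nsmul_eq_mul, Finset.card_powersetCard]
  rw [Finset.sum_congr rfl hRHS, Finset.sum_sigma', Finset.sum_sigma']
  refine Finset.sum_nbij' (fun q => ⟨q.1 ∪ q.2, q.1⟩) (fun q => ⟨q.2, q.1 \ q.2⟩)
    ?_ ?_ ?_ ?_ ?_
  · rintro ⟨w, z⟩ hq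
    rw [Finset.mem_sigma] at hq ⊢
    obtain ⟨hw, hz⟩ := hq
    rw [Finset.mem_powersetCard] at hw hz ⊢
    obtain ⟨hzV, hzw⟩ := Finset.subset_sdiff.1 hz.1
    refine ⟨mem_kslice.2 ⟨Finset.union_subset (hw.1.trans hxV) hzV, ?_⟩,
      ⟨Finset.subset_inter hw.1 Finset.subset_union_left, hw.2⟩⟩
    rw [Finset.card_union_of_disjoint hzw.symm, hw.2, hz.2]
    omega
  · rintro ⟨y, w⟩ hq
    rw [Finset.mem_sigma] at hq ⊢
    dsimp only at hq ⊢
    obtain ⟨hy, hw⟩ := hq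
    obtain ⟨hyV, hyc⟩ := mem_kslice.1 hy
    rw [Finset.mem_powersetCard] at hw
    have hwy : w ⊆ y := hw.1.trans Finset.inter_subset_right
    refine ⟨Finset.mem_powersetCard.2 ⟨hw.1.trans Finset.inter_subset_left, hw.2⟩,
      Finset.mem_powersetCard.2 ⟨?_, ?_⟩⟩
    · exact Finset.sdiff_subset_sdiff hyV (le_refl w)
    · rw [Finset.card_sdiff_of_subset hwy, hyc, hw.2]
  · rintro ⟨w, z⟩ hq
    rw [Finset.mem_sigma] at hq
    obtain ⟨hw, hz⟩ := hq
    rw [Finset.mem_powersetCard] at hw hz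
    have hzw : Disjoint w z := ((Finset.subset_sdiff.1 hz.1).2).symm
    simp only [Sigma.mk.inj_iff, heq_eq_eq, true_and]
    exact Finset.union_sdiff_cancel_left hzw
  · rintro ⟨y, w⟩ hq
    rw [Finset.mem_sigma] at hq
    obtain ⟨hy, hw⟩ := hq
    rw [Finset.mem_powersetCard] at hw
    have hwy : w ⊆ y := hw.1.trans Finset.inter_subset_right
    simp only [Sigma.mk.inj_iff, heq_eq_eq, and_true]
    exact Finset.union_sdiff_of_subset hwy
  · rintro ⟨w, z⟩ _
    rfl

lemma kslice_sdiff_eq_filter (k : ℕ) (x : Finset α) :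
    kslice (V \ x) k = (kslice V k).filter (fun y => (x ∩ y).card = 0) := by
  ext y
  rw [Finset.mem_filter, mem_kslice, mem_kslice, Finset.subset_sdiff, Finset.card_eq_zero,
    ← Finset.disjoint_iff_inter_eq_empty]
  constructor
  · rintro ⟨⟨h1, h2⟩, h3⟩
    exact ⟨⟨h1, h3⟩, h2.symm⟩
  · rintro ⟨⟨h1, h3⟩, h2⟩
    exact ⟨⟨h1, h2.symm⟩, h3⟩

lemma alt_one (k : ℕ) {t : ℕ} (ht : t ≤ k) :
    ∑ r ∈ Finset.range (k+1), (-1:ℚ)^(k-r) * ((t.choose (k-r) : ℕ) : ℚ)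
      = if t = 0 then 1 else 0 := by
  have hrefl : ∑ r ∈ Finset.range (k+1), (-1:ℚ)^(k-r) * ((t.choose (k-r) : ℕ) : ℚ)
      = ∑ m ∈ Finset.range (k+1), (-1:ℚ)^m * ((t.choose m : ℕ) : ℚ) := by
    have h0 := Finset.sum_range_reflect (fun m => (-1:ℚ)^m * ((t.choose m : ℕ) : ℚ)) (k+1)
    rw [← h0]
    refine Finset.sum_congr rfl fun r hr => ?_
    rw [show k + 1 - 1 - r = k - r from by omega]
  rw [hrefl]
  have hsub : ∑ m ∈ Finset.range (k+1), (-1:ℚ)^m * ((t.choose m : ℕ) : ℚ)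
      = ∑ m ∈ Finset.range (t+1), (-1:ℚ)^m * ((t.choose m : ℕ) : ℚ) := by
    symm
    refine Finset.sum_subset (by intro m hm; rw [Finset.mem_range] at *; omega) ?_
    intro m hm1 hm2
    rw [Finset.mem_range] at hm1 hm2
    rw [Nat.choose_eq_zero_of_lt (by omega)]
    norm_num
  rw [hsub]
  have hZ := Int.alternating_sum_range_choose (n := t)
  have hQ := congrArg (fun z : ℤ => (z : ℚ)) hZ
  push_cast at hQ
  rw [hQ]

lemma A0_rep (k : ℕ) (b : Finset α → ℚ) {x : Finset α} (hx : x ∈ kslice V k) :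
    A0 V k b x
      = ∑ r ∈ Finset.range (k+1),
          (-1:ℚ)^(k-r) / ((r.factorial : ℚ))^2 * (up^[r] ((dn V)^[r] b)) x := by
  have hterm : ∀ r ∈ Finset.range (k+1),
      (-1:ℚ)^(k-r) / ((r.factorial : ℚ))^2 * (up^[r] ((dn V)^[r] b)) x
        = ∑ y ∈ kslice V k, (-1:ℚ)^(k-r) * ((((x ∩ y).card.choose (k-r) : ℕ) : ℚ) * b y) := by
    intro r hr
    rw [Finset.mem_range] at hr
    have h1 : up^[r] ((dn V)^[r] b) x
        = (r.factorial : ℚ) * ∑ w ∈ x.powersetCard (k-r), (dn V)^[r] b w :=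
      up_iter_eq r _ (k-r) x (by rw [(mem_kslice.1 hx).2]; omega)
    have h2 : ∀ w ∈ x.powersetCard (k-r), (dn V)^[r] b w
        = (r.factorial : ℚ) * ∑ z ∈ (V \ w).powersetCard r, b (w ∪ z) :=
      fun w _ => dn_iter_eq r b w
    have h3 : ∑ w ∈ x.powersetCard (k-r), ∑ z ∈ (V \ w).powersetCard r, b (w ∪ z)
        = ∑ y ∈ kslice V k, (((x ∩ y).card.choose (k-r) : ℕ) : ℚ) * b y := by
      have h4 := sum_union_split (V := V) k (k-r) (by omega) b hx
      rwa [show k - (k - r) = r from by omega] at h4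
    have hpull : ∑ w ∈ x.powersetCard (k-r), (r.factorial : ℚ) * ∑ z ∈ (V \ w).powersetCard r, b (w ∪ z)
        = (r.factorial : ℚ) * ∑ w ∈ x.powersetCard (k-r), ∑ z ∈ (V \ w).powersetCard r, b (w ∪ z) :=
      (Finset.mul_sum _ _ _).symm
    have hfne : ((r.factorial : ℚ)) ≠ 0 := by
      exact_mod_cast Nat.factorial_ne_zero r
    rw [h1, Finset.sum_congr rfl h2, hpull, h3, ← Finset.mul_sum]
    field_simp
  rw [Finset.sum_congr rfl hterm]
  rw [show (∑ r ∈ Finset.range (k+1), ∑ y ∈ kslice V k,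
        (-1:ℚ)^(k-r) * ((((x ∩ y).card.choose (k-r) : ℕ) : ℚ) * b y))
      = ∑ y ∈ kslice V k, ∑ r ∈ Finset.range (k+1),
        (-1:ℚ)^(k-r) * ((((x ∩ y).card.choose (k-r) : ℕ) : ℚ) * b y) from Finset.sum_comm]
  have hyterm : ∀ y ∈ kslice V k,
      ∑ r ∈ Finset.range (k+1), (-1:ℚ)^(k-r) * ((((x ∩ y).card.choose (k-r) : ℕ) : ℚ) * b y)
        = (if (x ∩ y).card = 0 then (1:ℚ) else 0) * b y := by
    intro y hy
    have htk : (x ∩ y).card ≤ k := by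
      have := Finset.card_le_card (Finset.inter_subset_left (s₂ := y) (s₁ := x))
      rw [(mem_kslice.1 hx).2] at this
      exact this
    rw [← alt_one k htk, Finset.sum_mul]
    refine Finset.sum_congr rfl fun r _ => ?_
    ring
  rw [Finset.sum_congr rfl hyterm]
  unfold A0
  rw [kslice_sdiff_eq_filter, Finset.sum_filter]
  refine Finset.sum_congr rfl fun y _ => ?_
  split_ifs <;> norm_num

lemma alt_sum_choose : ∀ (a b m : ℕ),
    ∑ r ∈ Finset.range (a+1), (-1:ℚ)^r * (a.choose r : ℕ) * ((b+r).choose m : ℕ)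
      = if a ≤ m then (-1:ℚ)^a * ((b.choose (m-a) : ℕ) : ℚ) else 0 := by
  intro a
  induction a with
  | zero =>
    intro b m
    simp
  | succ a ih =>
    intro b m
    have hstep : ∑ r ∈ Finset.range (a+2), (-1:ℚ)^r * ((a+1).choose r : ℕ) * ((b+r).choose m : ℕ)
        = (∑ r ∈ Finset.range (a+1), (-1:ℚ)^r * (a.choose r : ℕ) * ((b+r).choose m : ℕ))
          - ∑ r ∈ Finset.range (a+1), (-1:ℚ)^r * (a.choose r : ℕ) * (((b+1)+r).choose m : ℕ) := by
      rw [Finset.sum_range_succ' (fun r => (-1:ℚ)^r * ((a+1).choose r : ℕ) * ((b+r).choose m : ℕ)) (a+1)]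
      have hsplit : ∀ i ∈ Finset.range (a+1),
          (-1:ℚ)^(i+1) * ((a+1).choose (i+1) : ℕ) * ((b+(i+1)).choose m : ℕ)
            = (-1:ℚ)^(i+1) * (a.choose i : ℕ) * (((b+1)+i).choose m : ℕ)
              + (-1:ℚ)^(i+1) * (a.choose (i+1) : ℕ) * ((b+(i+1)).choose m : ℕ) := by
        intro i _
        rw [Nat.choose_succ_succ]
        have hbi : b + (i+1) = (b+1) + i := by omega
        rw [hbi]
        push_cast
        ring
      rw [Finset.sum_congr rfl hsplit, Finset.sum_add_distrib]
      have hA : ∑ i ∈ Finset.range (a+1), (-1:ℚ)^(i+1) * (a.choose i : ℕ) * (((b+1)+i).choose m : ℕ)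
          = - ∑ r ∈ Finset.range (a+1), (-1:ℚ)^r * (a.choose r : ℕ) * (((b+1)+r).choose m : ℕ) := by
        rw [← Finset.sum_neg_distrib]
        refine Finset.sum_congr rfl fun i _ => ?_
        ring
      have hB : (∑ i ∈ Finset.range (a+1), (-1:ℚ)^(i+1) * (a.choose (i+1) : ℕ) * ((b+(i+1)).choose m : ℕ))
            + (-1:ℚ)^0 * ((a+1).choose 0 : ℕ) * ((b+0).choose m : ℕ)
          = ∑ r ∈ Finset.range (a+1), (-1:ℚ)^r * (a.choose r : ℕ) * ((b+r).choose m : ℕ) := by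
        have h0 : (∑ i ∈ Finset.range (a+1), (-1:ℚ)^(i+1) * (a.choose (i+1) : ℕ) * ((b+(i+1)).choose m : ℕ))
              + (-1:ℚ)^0 * ((a).choose 0 : ℕ) * ((b+0).choose m : ℕ)
            = ∑ r ∈ Finset.range (a+2), (-1:ℚ)^r * (a.choose r : ℕ) * ((b+r).choose m : ℕ) := by
          rw [Finset.sum_range_succ' (fun r => (-1:ℚ)^r * (a.choose r : ℕ) * ((b+r).choose m : ℕ)) (a+1)]
        rw [show ((a+1).choose 0 : ℕ) = (a.choose 0 : ℕ) from by simp, h0, Finset.sum_range_succ]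
        rw [Nat.choose_succ_self]
        norm_num
      linarith [hA, hB]
    rw [hstep, ih b m, ih (b+1) m]
    by_cases h1 : a + 1 ≤ m
    · rw [if_pos h1, if_pos (by omega), if_pos (by omega)]
      have hma : m - a = (m - (a+1)) + 1 := by omega
      rw [hma, Nat.choose_succ_succ]
      push_cast
      ring
    · by_cases h2 : a ≤ m
      · have ham : a = m := by omega
        subst ham
        rw [if_pos (le_refl a), if_pos (le_refl a), if_neg h1]
        simp
      · rw [if_neg h2, if_neg h2, if_neg h1]
        ring

lemma choose_bound {k j : ℕ} (hj3 : 3 ≤ j) (hjk : j ≤ k) :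
    8 * ((2*k-j).choose (k-j)) ≤ (2*k).choose k := by
  have step : ∀ i, 1 ≤ i → i ≤ k →
      2 * ((2*k-i).choose (k-i)) ≤ (2*k-(i-1)).choose (k-(i-1)) := by
    intro i hi1 hik
    have hid : 2*k-(i-1) = (2*k-i)+1 := by omega
    have hid2 : k-(i-1) = (k-i)+1 := by omega
    rw [hid, hid2]
    have key := Nat.add_one_mul_choose_eq (2*k-i) (k-i)
    -- (2k-i+1) * C(2k-i, k-i) = C(2k-i+1, k-i+1) * (k-i+1)
    have h2 : 2 * ((k-i)+1) * ((2*k-i).choose (k-i)) ≤ ((2*k-i)+1) * ((2*k-i).choose (k-i)) := by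
      have : 2 * ((k-i)+1) ≤ (2*k-i)+1 := by omega
      exact Nat.mul_le_mul_right _ this
    have h3 : 2 * ((k-i)+1) * ((2*k-i).choose (k-i))
        ≤ ((2*k-i)+1).choose ((k-i)+1) * ((k-i)+1) := by
      calc 2 * ((k-i)+1) * ((2*k-i).choose (k-i)) ≤ ((2*k-i)+1) * ((2*k-i).choose (k-i)) := h2
        _ = ((2*k-i)+1).choose ((k-i)+1) * ((k-i)+1) := by
            have := Nat.add_one_mul_choose_eq (2*k-i) (k-i)
            simpa [Nat.succ_eq_add_one] using this
    have h4 : 2 * ((2*k-i).choose (k-i)) * ((k-i)+1) ≤ ((2*k-i)+1).choose ((k-i)+1) * ((k-i)+1) := by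
      calc 2 * ((2*k-i).choose (k-i)) * ((k-i)+1)
          = 2 * ((k-i)+1) * ((2*k-i).choose (k-i)) := by ring
        _ ≤ ((2*k-i)+1).choose ((k-i)+1) * ((k-i)+1) := h3
    exact Nat.le_of_mul_le_mul_right h4 (by omega)
  have chain : ∀ j', j' ≤ k → 2^j' * ((2*k-j').choose (k-j')) ≤ (2*k).choose k := by
    intro j'
    induction j' with
    | zero => intro _; simp
    | succ j' ih =>
      intro hj'
      have hs := step (j'+1) (by omega) hj'
      have : 2^(j'+1) * ((2*k-(j'+1)).choose (k-(j'+1)))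
          = 2^j' * (2 * ((2*k-(j'+1)).choose (k-(j'+1)))) := by ring
      rw [this]
      calc 2^j' * (2 * ((2*k-(j'+1)).choose (k-(j'+1))))
          ≤ 2^j' * ((2*k-((j'+1)-1)).choose (k-((j'+1)-1))) := Nat.mul_le_mul_left _ hs
        _ = 2^j' * ((2*k-j').choose (k-j')) := by norm_num
        _ ≤ (2*k).choose k := ih (by omega)
  calc 8 * ((2*k-j).choose (k-j)) ≤ 2^j * ((2*k-j).choose (k-j)) := by
        have : (8:ℕ) ≤ 2^j := by
          calc (8:ℕ) = 2^3 := rfl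
            _ ≤ 2^j := Nat.pow_le_pow_right (by omega) hj3
        exact Nat.mul_le_mul_right _ this
    _ ≤ (2*k).choose k := chain j hjk

lemma ip_up_dn_iter' (M s m : ℕ) (hM : M = m + s) (a b : Finset α → ℚ) :
    ip V M (up^[s] a) b = ip V m a ((dn V)^[s] b) := by
  subst hM; exact ip_up_dn_iter s m a b

lemma dn_iter_up_self_zero (k : ℕ) {j r : ℕ} (hj : j ≤ k) (hr : r ≤ k) (hrkj : k - j < r)
    {h : Finset α → ℚ} (hh : IsHarm V j h) :
    ∀ y ∈ kslice V (k - r), (dn V)^[r] (up^[k-j] h) y = 0 := by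
  intro y hy
  obtain ⟨e, he⟩ : ∃ e, r = e + (k-j) := ⟨r - (k-j), by omega⟩
  have he1 : 1 ≤ e := by omega
  have hej : e ≤ j := by omega
  rw [he, Function.iterate_add_apply]
  have hin : ∀ z ∈ kslice V ((k-r) + e), (dn V)^[k-j] (up^[k-j] h) z
      = (βcoef V j (k-j) 0 • h) z := by
    intro z hz
    have hz' : z ∈ kslice V (j + 0) := by
      rwa [show j + 0 = (k-r)+e from by omega]
    have h5 := dn_iter_up_harm hh (k-j) 0 z hz'
    rw [show (k-j) + 0 = k-j from rfl] at h5
    rw [h5, Pi.smul_apply, smul_eq_mul]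
    rfl
  rw [dn_congr hin y hy, dn_iter_smul, Pi.smul_apply, smul_eq_mul]
  have hz0 : (dn V)^[e] h y = 0 := by
    have hy' : y ∈ kslice V (j - e) := by rwa [show j - e = k - r from by omega]
    exact dn_iter_harm_zero hh he1 hej y hy'
  rw [hz0, mul_zero]

lemma A0_harm (k : ℕ) (hV : V.card = 3*k) {j : ℕ} (hj : j ≤ k)
    {h : Finset α → ℚ} (hh : IsHarm V j h) {x : Finset α} (hx : x ∈ kslice V k) :
    A0 V k (up^[k-j] h) x
      = (-1:ℚ)^j * (((2*k-j).choose (k-j) : ℕ) : ℚ) * (up^[k-j] h) x := by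
  rw [A0_rep k _ hx]
  have hterm : ∀ r ∈ Finset.range (k+1),
      (-1:ℚ)^(k-r) / ((r.factorial : ℚ))^2 * (up^[r] ((dn V)^[r] (up^[k-j] h))) x
        = (if r ≤ k-j then (-1:ℚ)^(k-r) / ((r.factorial : ℚ))^2 * βcoef V j r (k-j-r) else 0)
            * (up^[k-j] h) x := by
    intro r hr
    rw [Finset.mem_range] at hr
    by_cases hrkj : r ≤ k - j
    · rw [if_pos hrkj]
      have hin : ∀ y ∈ kslice V (k - r), (dn V)^[r] (up^[k-j] h) y
          = (βcoef V j r (k-j-r) • up^[k-j-r] h) y := by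
        intro y hy
        have hy' : y ∈ kslice V (j + (k-j-r)) := by
          rwa [show j + (k-j-r) = k - r from by omega]
        have h5 := dn_iter_up_harm hh r (k-j-r) y hy'
        rw [show r + (k-j-r) = k-j from by omega] at h5
        rw [h5, Pi.smul_apply, smul_eq_mul]
      have hout := up_congr (V := V) (m := k - r) (s := r) hin x
        (by rwa [show (k-r) + r = k from by omega])
      rw [hout, up_iter_smul, Pi.smul_apply, smul_eq_mul]
      have hit : up^[r] (up^[k-j-r] h) x = up^[k-j] h x := by
        rw [← Function.iterate_add_apply, show r + (k-j-r) = k-j from by omega]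
      rw [hit]
      ring
    · rw [if_neg hrkj, zero_mul]
      have hzero := dn_iter_up_self_zero (V := V) k (j := j) (r := r) hj (by omega) (by omega) hh
      have hzero' : ∀ y ∈ kslice V (k - r), (dn V)^[r] (up^[k-j] h) y
          = (0 : Finset α → ℚ) y := fun y hy => hzero y hy
      have h6 := up_congr (V := V) (m := k-r) (s := r) hzero' x
        (by rwa [show (k-r) + r = k from by omega])
      rw [h6, up_iter_zero]
      simp
  rw [Finset.sum_congr rfl hterm, ← Finset.sum_mul]
  congr 1
  have hshrink : ∑ r ∈ Finset.range (k+1),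
      (if r ≤ k-j then (-1:ℚ)^(k-r) / ((r.factorial : ℚ))^2 * βcoef V j r (k-j-r) else 0)
      = ∑ r ∈ Finset.range (k-j+1),
      (if r ≤ k-j then (-1:ℚ)^(k-r) / ((r.factorial : ℚ))^2 * βcoef V j r (k-j-r) else 0) := by
    symm
    refine Finset.sum_subset (fun r hr => by rw [Finset.mem_range] at *; omega) ?_
    intro r _ hr2
    rw [Finset.mem_range] at hr2
    rw [if_neg (by omega)]
  rw [hshrink]
  have hval : ∀ r ∈ Finset.range (k-j+1),
      (if r ≤ k-j then (-1:ℚ)^(k-r) / ((r.factorial : ℚ))^2 * βcoef V j r (k-j-r) else 0)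
        = (-1:ℚ)^k * ((-1:ℚ)^r * ((k-j).choose r : ℕ) * (((2*k-j)+r).choose (2*k-j) : ℕ)) := by
    intro r hr
    rw [Finset.mem_range] at hr
    rw [if_pos (by omega)]
    have hβ := βcoef_eq (V := V) (j := j) (s := r) (t := k-j-r)
      (by rw [hV]; omega)
    rw [show V.card - 2*j - (k-j-r) - r = 2*k-j from by rw [hV]; omega,
        show V.card - 2*j - (k-j-r) = (2*k-j)+r from by rw [hV]; omega,
        show r + (k-j-r) = k-j from by omega] at hβ
    have hch1 : ((k-j).choose r) * r.factorial * ((k-j)-r).factorial = (k-j).factorial :=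
      Nat.choose_mul_factorial_mul_factorial (by omega)
    have hch2 : (((2*k-j)+r).choose r) * r.factorial * (((2*k-j)+r)-r).factorial
        = ((2*k-j)+r).factorial := Nat.choose_mul_factorial_mul_factorial (by omega)
    rw [show ((2*k-j)+r)-r = 2*k-j from by omega] at hch2
    have hkjr : (k-j) - r = k-j-r := by omega
    have hfne : ∀ n : ℕ, ((n.factorial : ℕ) : ℚ) ≠ 0 :=
      fun n => by exact_mod_cast Nat.factorial_ne_zero n
    have hβval : βcoef V j r (k-j-r)
        = (((k-j).choose r : ℕ) : ℚ) * ((((2*k-j)+r).choose r : ℕ) : ℚ) * ((r.factorial : ℚ))^2 := by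
      have hc1 : ((k-j).factorial : ℚ)
          = (((k-j).choose r : ℕ) : ℚ) * (r.factorial : ℚ) * (((k-j-r).factorial : ℕ) : ℚ) := by
        rw [← hkjr]
        exact_mod_cast congrArg (fun n : ℕ => (n : ℚ)) hch1.symm
      have hc2 : ((((2*k-j)+r).factorial : ℕ) : ℚ)
          = ((((2*k-j)+r).choose r : ℕ) : ℚ) * (r.factorial : ℚ) * (((2*k-j).factorial : ℕ) : ℚ) := by
        exact_mod_cast congrArg (fun n : ℕ => (n : ℚ)) hch2.symm
      have hAB : (((k-j-r).factorial : ℚ) * (((2*k-j).factorial : ℕ) : ℚ)) ≠ 0 :=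
        mul_ne_zero (hfne _) (hfne _)
      refine mul_right_cancel₀ hAB ?_
      calc βcoef V j r (k-j-r) * (((k-j-r).factorial : ℚ) * (((2*k-j).factorial : ℕ) : ℚ))
          = βcoef V j r (k-j-r) * ((k-j-r).factorial : ℚ) * (((2*k-j).factorial : ℕ) : ℚ) := by
            ring
        _ = ((k-j).factorial : ℚ) * ((((2*k-j)+r).factorial : ℕ) : ℚ) := hβ
        _ = (((k-j).choose r : ℕ) : ℚ) * ((((2*k-j)+r).choose r : ℕ) : ℚ) * ((r.factorial : ℚ))^2
            * (((k-j-r).factorial : ℚ) * (((2*k-j).factorial : ℕ) : ℚ)) := by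
            rw [hc1, hc2]
            ring
    rw [hβval]
    have hsym : (((2*k-j)+r).choose r : ℕ) = (((2*k-j)+r).choose (2*k-j) : ℕ) := by
      have := Nat.choose_symm (n := (2*k-j)+r) (k := r) (by omega)
      rw [show ((2*k-j)+r) - r = 2*k-j from by omega] at this
      exact this.symm
    have hsgn : (-1:ℚ)^(k-r) = (-1:ℚ)^k * (-1:ℚ)^r := by
      have h9 : (-1:ℚ)^(k-r) * (-1:ℚ)^r = (-1:ℚ)^k := by
        rw [← pow_add, show k-r+r = k from by omega]
      have h10 : ((-1:ℚ)^r) * ((-1:ℚ)^r) = 1 := by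
        rw [← pow_add, ← two_mul]
        exact Even.neg_one_pow ⟨r, by ring⟩
      calc (-1:ℚ)^(k-r) = (-1:ℚ)^(k-r) * (((-1:ℚ)^r) * ((-1:ℚ)^r)) := by rw [h10, mul_one]
        _ = ((-1:ℚ)^(k-r) * (-1:ℚ)^r) * (-1:ℚ)^r := by ring
        _ = (-1:ℚ)^k * (-1:ℚ)^r := by rw [h9]
    rw [hsgn, ← hsym]
    field_simp
  rw [Finset.sum_congr rfl hval, ← Finset.mul_sum]
  rw [alt_sum_choose (k-j) (2*k-j) (2*k-j)]
  rw [if_pos (by omega : k-j ≤ 2*k-j)]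
  rw [show (2*k-j) - (k-j) = k from by omega]
  have hsym2 : ((2*k-j).choose k : ℕ) = ((2*k-j).choose (k-j) : ℕ) := by
    have := Nat.choose_symm (n := 2*k-j) (k := k) (by omega)
    rw [show (2*k-j) - k = k-j from by omega] at this
    exact this.symm
  rw [hsym2]
  have hsgn2 : (-1:ℚ)^k * (-1:ℚ)^(k-j) = (-1:ℚ)^j := by
    rw [← pow_add, show k + (k-j) = 2*(k-j) + j from by omega, pow_add, pow_mul]
    norm_num
  rw [← mul_assoc, hsgn2]

lemma ip_harm_ortho (k : ℕ) {j j' : ℕ} (hjj' : j < j') (hj' : j' ≤ k)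
    {h h' : Finset α → ℚ} (hh' : IsHarm V j' h') :
    ip V k (up^[k-j] h) (up^[k-j'] h') = 0 := by
  rw [ip_up_dn_iter' k (k-j) j (by omega)]
  unfold ip
  refine Finset.sum_eq_zero fun x hx => ?_
  have hD : (dn V)^[k-j] (up^[k-j'] h') x = 0 := by
    have he : k - j = (j'-j) + (k-j') := by omega
    rw [he, Function.iterate_add_apply]
    have hin : ∀ z ∈ kslice V (j + (j'-j)), (dn V)^[k-j'] (up^[k-j'] h') z
        = (βcoef V j' (k-j') 0 • h') z := by
      intro z hz
      have hz' : z ∈ kslice V (j' + 0) := by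
        rwa [show j' + 0 = j + (j'-j) from by omega]
      have h5 := dn_iter_up_harm hh' (k-j') 0 z hz'
      rw [show (k-j') + 0 = k-j' from rfl] at h5
      rw [h5, Pi.smul_apply, smul_eq_mul]
      rfl
    rw [dn_congr hin x hx, dn_iter_smul, Pi.smul_apply, smul_eq_mul]
    have hz0 : (dn V)^[j'-j] h' x = 0 := by
      have hx' : x ∈ kslice V (j' - (j'-j)) := by
        rwa [show j' - (j'-j) = j from by omega]
      exact dn_iter_harm_zero hh' (by omega) (by omega) x hx'
    rw [hz0, mul_zero]
  rw [hD, mul_zero]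

def extZ (V : Finset α) (m : ℕ) (a' : {x : Finset α // x ∈ kslice V m} → ℚ) :
    Finset α → ℚ :=
  fun x => if hx : x ∈ kslice V m then a' ⟨x, hx⟩ else 0

lemma extZ_add (V : Finset α) (m : ℕ) (a b : {x : Finset α // x ∈ kslice V m} → ℚ) :
    extZ V m (a + b) = extZ V m a + extZ V m b := by
  funext x
  by_cases hx : x ∈ kslice V m <;> simp [extZ, hx]

lemma extZ_smul (V : Finset α) (m : ℕ) (c : ℚ) (a : {x : Finset α // x ∈ kslice V m} → ℚ) :
    extZ V m (c • a) = c • extZ V m a := by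
  funext x
  by_cases hx : x ∈ kslice V m <;> simp [extZ, hx]

def Tmap (V : Finset α) (m : ℕ) :
    ({x : Finset α // x ∈ kslice V m} → ℚ) →ₗ[ℚ] ({x : Finset α // x ∈ kslice V m} → ℚ) where
  toFun a' := fun w => dn V (up (extZ V m a')) w.1
  map_add' a b := by
    funext w
    simp only [extZ_add, up_add, dn_add, Pi.add_apply]
  map_smul' c a := by
    funext w
    simp only [extZ_smul, up_smul, dn_smul, Pi.smul_apply, RingHom.id_apply, smul_eq_mul]

theorem decomp (m : ℕ) (hm : 2*m ≤ V.card) (u : Finset α → ℚ) :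
    ∃ hs : ℕ → Finset α → ℚ, (∀ j, IsHarm V j (hs j)) ∧
      ∀ x ∈ kslice V m, u x = ∑ j ∈ Finset.range (m+1), up^[m-j] (hs j) x := by
  induction m generalizing u with
  | zero =>
    refine ⟨fun j => if j = 0 then u else 0, fun j => ?_, fun x hx => ?_⟩
    · by_cases hj : j = 0
      · subst hj
        intro w _ hw
        exact absurd hw (by omega)
      · intro w _ _
        show dn V (if j = 0 then u else 0) w = 0
        rw [if_neg hj, dn_zero]
        rfl
    · simp
  | succ m ih =>
    -- invertibility of Tmap
    have hinj : Function.Injective (Tmap V m) := by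
      rw [injective_iff_map_eq_zero]
      intro a' ha'
      have haval : ∀ w ∈ kslice V m, dn V (up (extZ V m a')) w = 0 := by
        intro w hw
        have := congrFun ha' ⟨w, hw⟩
        exact this
      set a := extZ V m a' with hadef
      have hupa : ∀ y ∈ kslice V (m+1), up a y = 0 := by
        have hip : ip V (m+1) (up a) (up a) = 0 := by
          rw [ip_up_dn]
          unfold ip
          refine Finset.sum_eq_zero fun w hw => ?_
          rw [haval w hw, mul_zero]
        have hnn : ∀ y ∈ kslice V (m+1), 0 ≤ up a y * up a y := fun y _ => mul_self_nonneg _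
        intro y hy
        have := (Finset.sum_eq_zero_iff_of_nonneg hnn).1 hip y hy
        exact mul_self_eq_zero.1 this
      have hazero : ∀ w ∈ kslice V m, a w = 0 := by
        -- 0 = ip m a (dn (up a)) = ‖dn a‖² + (n-2m)‖a‖²
        have hdnup : ∀ w ∈ kslice V m,
            up (dn V a) w + ((V.card : ℚ) - 2 * m) * a w = 0 := by
          intro w hw
          obtain ⟨hwV, hwc⟩ := mem_kslice.1 hw
          have := dn_up_comm (V := V) a hwV
          rw [hwc] at this
          rw [← this]
          exact haval w hw
        have hsum : ip V m (up (dn V a)) a + ((V.card : ℚ) - 2 * m) * ip V m a a = 0 := by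
          unfold ip
          rw [Finset.mul_sum, ← Finset.sum_add_distrib]
          refine Finset.sum_eq_zero fun w hw => ?_
          have h5 := hdnup w hw
          calc up (dn V a) w * a w + ((V.card : ℚ) - 2 * m) * (a w * a w)
              = (up (dn V a) w + ((V.card : ℚ) - 2 * m) * a w) * a w := by ring
            _ = 0 := by rw [h5, zero_mul]
        have hfirst : 0 ≤ ip V m (up (dn V a)) a := by
          cases m with
          | zero =>
            have : ip V 0 (up (dn V a)) a = 0 := by
              unfold ip up
              refine Finset.sum_eq_zero fun w hw => ?_
              have hwc : w.card = 0 := (mem_kslice.1 hw).2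
              rw [Finset.card_eq_zero.1 hwc]
              simp
            rw [this]
          | succ m' =>
            rw [ip_up_dn]
            unfold ip
            exact Finset.sum_nonneg fun w _ => mul_self_nonneg _
        have hcpos : (0:ℚ) < (V.card : ℚ) - 2 * m := by
          have : 2*m < V.card := by omega
          have h4 := (Nat.cast_lt (α := ℚ)).2 this
          push_cast at h4
          linarith
        have hip2 : ip V m a a ≤ 0 := by nlinarith [hfirst, hsum, hcpos]
        have hnn : ∀ w ∈ kslice V m, 0 ≤ a w * a w := fun w _ => mul_self_nonneg _
        have hzero : ip V m a a = 0 := le_antisymm hip2 (Finset.sum_nonneg hnn)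
        intro w hw
        exact mul_self_eq_zero.1 ((Finset.sum_eq_zero_iff_of_nonneg hnn).1 hzero w hw)
      funext w
      have := hazero w.1 w.2
      rw [hadef] at this
      unfold extZ at this
      rw [dif_pos w.2] at this
      exact this
    have hsurj : Function.Surjective (Tmap V m) :=
      (LinearMap.injective_iff_surjective).1 hinj
    obtain ⟨a', ha'⟩ := hsurj (fun w => dn V u w.1)
    set a := extZ V m a' with hadef
    have hmatch : ∀ w ∈ kslice V m, dn V (up a) w = dn V u w := by
      intro w hw
      exact congrFun ha' ⟨w, hw⟩
    -- h := u - up a is harmonic at level m+1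
    have hharm : IsHarm V (m+1) (fun y => u y - up a y) := by
      intro w hwp hwc
      have hw : w ∈ kslice V m := mem_kslice.2 ⟨Finset.mem_powerset.1 hwp, by omega⟩
      have hsub : dn V (fun y => u y - up a y) w = dn V u w - dn V (up a) w := by
        unfold dn
        rw [← Finset.sum_sub_distrib]
      rw [hsub, hmatch w hw, sub_self]
    obtain ⟨hs, hhs, hdec⟩ := ih (by omega) a
    refine ⟨fun j => if j = m+1 then (fun y => u y - up a y) else hs j, fun j => ?_, fun x hx => ?_⟩
    · by_cases hj : j = m+1
      · subst hj
        show IsHarm V (m+1) (if m+1 = m+1 then (fun y => u y - up a y) else hs (m+1))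
        rw [if_pos rfl]
        exact hharm
      · show IsHarm V j (if j = m+1 then (fun y => u y - up a y) else hs j)
        rw [if_neg hj]
        exact hhs j
    · rw [Finset.sum_range_succ]
      have hlastf : ((fun j => if j = m+1 then (fun y => u y - up a y) else hs j) (m+1))
          = (fun y => u y - up a y) := by
        simp
      have hsmall : ∀ j ∈ Finset.range (m+1),
          up^[m+1-j] ((fun j => if j = m+1 then (fun y => u y - up a y) else hs j) j) x
            = up^[m+1-j] (hs j) x := by
        intro j hj
        rw [Finset.mem_range] at hj
        have hfj : ((fun j => if j = m+1 then (fun y => u y - up a y) else hs j) j) = hs j := by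
          simp only
          rw [if_neg (by omega)]
        rw [hfj]
      rw [Finset.sum_congr rfl hsmall, hlastf]
      rw [show (m+1) - (m+1) = 0 from by omega, Function.iterate_zero_apply]
      have hupax : up a x = ∑ j ∈ Finset.range (m+1), up^[m+1-j] (hs j) x := by
        have hup1 : up a x = ∑ i ∈ x, a (x.erase i) := rfl
        have hup2 : ∀ i ∈ x, a (x.erase i)
            = ∑ j ∈ Finset.range (m+1), up^[m-j] (hs j) (x.erase i) := by
          intro i hi
          exact hdec (x.erase i) (erase_mem_kslice hx hi)
        rw [hup1, Finset.sum_congr rfl hup2, Finset.sum_comm]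
        refine Finset.sum_congr rfl fun j hj => ?_
        rw [Finset.mem_range] at hj
        rw [show m+1-j = (m-j)+1 from by omega, Function.iterate_succ_apply']
        rfl
      rw [← hupax]
      show u x = up a x + (u x - up a x)
      ring

lemma dn_iter_finsum (s : ℕ) (F : Finset ℕ) :
    ∀ f : ℕ → Finset α → ℚ,
    (dn V)^[s] (fun y => ∑ j ∈ F, f j y) = fun x => ∑ j ∈ F, (dn V)^[s] (f j) x := by
  induction s with
  | zero => intro f; rfl
  | succ s ih =>
    intro f
    rw [Function.iterate_succ_apply]
    have h1 : dn V (fun y => ∑ j ∈ F, f j y) = fun y => ∑ j ∈ F, dn V (f j) y := by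
      funext y
      unfold dn
      rw [Finset.sum_comm]
    rw [h1, ih (fun j => dn V (f j))]
    funext x
    refine Finset.sum_congr rfl fun j _ => ?_
    rw [Function.iterate_succ_apply]

theorem spectral (k : ℕ) (hV : V.card = 3*k) (u : Finset α → ℚ)
    (hu : ∀ w ∈ kslice V 1, (dn V)^[k-1] u w = 0) :
    0 ≤ 8 * (∑ x ∈ kslice V k, u x * A0 V k u x)
        + (((2*k).choose k : ℕ) : ℚ) * ∑ x ∈ kslice V k, u x * u x := by
  obtain ⟨hs, hhs, hdec⟩ := decomp (V := V) k (by omega) u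
  set C2 : ℚ := (((2*k).choose k : ℕ) : ℚ) with hC2
  set Λ : ℕ → ℚ := fun j => (-1:ℚ)^j * (((2*k-j).choose (k-j) : ℕ) : ℚ) with hΛ
  -- A0 u = Σ_j Λ_j g_j on the slice
  have hA0 : ∀ x ∈ kslice V k, A0 V k u x
      = ∑ j ∈ Finset.range (k+1), Λ j * up^[k-j] (hs j) x := by
    intro x hx
    have h1 : ∀ y ∈ kslice (V \ x) k, u y
        = ∑ j ∈ Finset.range (k+1), up^[k-j] (hs j) y := by
      intro y hy
      obtain ⟨hy1, hy2⟩ := mem_kslice.1 hy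
      exact hdec y (mem_kslice.2 ⟨hy1.trans (Finset.sdiff_subset), hy2⟩)
    show (∑ y ∈ kslice (V \ x) k, u y) = _
    rw [Finset.sum_congr rfl h1]
    rw [show (∑ y ∈ kslice (V \ x) k, ∑ j ∈ Finset.range (k+1), up^[k-j] (hs j) y)
        = ∑ j ∈ Finset.range (k+1), ∑ y ∈ kslice (V \ x) k, up^[k-j] (hs j) y
      from Finset.sum_comm]
    refine Finset.sum_congr rfl fun j hj => ?_
    rw [Finset.mem_range] at hj
    have h2 := A0_harm (V := V) k hV (by omega : j ≤ k) (hhs j) hx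
    unfold A0 at h2
    rw [h2, hΛ]
  have hnn : ∀ j, 0 ≤ ip V k (up^[k-j] (hs j)) (up^[k-j] (hs j)) :=
    fun j => Finset.sum_nonneg fun x _ => mul_self_nonneg _
  have northo : ∀ j j', j ≠ j' → j ≤ k → j' ≤ k →
      ip V k (up^[k-j] (hs j)) (up^[k-j'] (hs j')) = 0 := by
    intro j j' hne hj hj'
    rcases lt_or_gt_of_ne hne with h | h
    · exact ip_harm_ortho k h hj' (hhs j')
    · rw [ip_comm]
      exact ip_harm_ortho k h hj (hhs j)
  have hcross : ∀ j' ∈ Finset.range (k+1), (∑ x ∈ kslice V k, u x * up^[k-j'] (hs j') x)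
      = ip V k (up^[k-j'] (hs j')) (up^[k-j'] (hs j')) := by
    intro j' hj'
    rw [Finset.mem_range] at hj'
    have h1 : ∀ x ∈ kslice V k, u x * up^[k-j'] (hs j') x
        = ∑ j ∈ Finset.range (k+1), up^[k-j] (hs j) x * up^[k-j'] (hs j') x := by
      intro x hx
      rw [hdec x hx, Finset.sum_mul]
    rw [Finset.sum_congr rfl h1]
    rw [show (∑ x ∈ kslice V k, ∑ j ∈ Finset.range (k+1),
          up^[k-j] (hs j) x * up^[k-j'] (hs j') x)
        = ∑ j ∈ Finset.range (k+1), ∑ x ∈ kslice V k,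
          up^[k-j] (hs j) x * up^[k-j'] (hs j') x
      from Finset.sum_comm]
    rw [Finset.sum_eq_single_of_mem j' (Finset.mem_range.2 (by omega))]
    · rfl
    · intro j hj hne
      rw [Finset.mem_range] at hj
      exact northo j j' hne (by omega) (by omega)
  have hAuu : (∑ x ∈ kslice V k, u x * A0 V k u x)
      = ∑ j ∈ Finset.range (k+1), Λ j * ip V k (up^[k-j] (hs j)) (up^[k-j] (hs j)) := by
    have h1 : ∀ x ∈ kslice V k, u x * A0 V k u x
        = ∑ j ∈ Finset.range (k+1), Λ j * (u x * up^[k-j] (hs j) x) := by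
      intro x hx
      rw [hA0 x hx, Finset.mul_sum]
      exact Finset.sum_congr rfl fun j _ => by ring
    rw [Finset.sum_congr rfl h1]
    rw [show (∑ x ∈ kslice V k, ∑ j ∈ Finset.range (k+1), Λ j * (u x * up^[k-j] (hs j) x))
        = ∑ j ∈ Finset.range (k+1), ∑ x ∈ kslice V k, Λ j * (u x * up^[k-j] (hs j) x)
      from Finset.sum_comm]
    refine Finset.sum_congr rfl fun j hj => ?_
    rw [← Finset.mul_sum, hcross j hj]
  have hipuu : (∑ x ∈ kslice V k, u x * u x)
      = ∑ j ∈ Finset.range (k+1), ip V k (up^[k-j] (hs j)) (up^[k-j] (hs j)) := by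
    have h1 : ∀ x ∈ kslice V k, u x * u x
        = ∑ j ∈ Finset.range (k+1), u x * up^[k-j] (hs j) x := by
      intro x hx
      calc u x * u x = u x * ∑ j ∈ Finset.range (k+1), up^[k-j] (hs j) x := by
            rw [← hdec x hx]
        _ = ∑ j ∈ Finset.range (k+1), u x * up^[k-j] (hs j) x := Finset.mul_sum _ _ _
    rw [Finset.sum_congr rfl h1]
    rw [show (∑ x ∈ kslice V k, ∑ j ∈ Finset.range (k+1), u x * up^[k-j] (hs j) x)
        = ∑ j ∈ Finset.range (k+1), ∑ x ∈ kslice V k, u x * up^[k-j] (hs j) x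
      from Finset.sum_comm]
    exact Finset.sum_congr rfl hcross
  -- the level-1 component vanishes (uses egalitarian hypothesis hu)
  have nip1 : 1 ≤ k → ip V k (up^[k-1] (hs 1)) (up^[k-1] (hs 1)) = 0 := by
    intro hk1
    have hw1 : ∀ w ∈ kslice V 1,
        βcoef V 0 (k-1) 1 * up^[1] (hs 0) w + βcoef V 1 (k-1) 0 * up^[0] (hs 1) w = 0 := by
      intro w hw
      have hdn : (dn V)^[k-1] u w = 0 := hu w hw
      have hcong : ∀ y ∈ kslice V (1 + (k-1)), u y
          = (fun y => ∑ j ∈ Finset.range (k+1), up^[k-j] (hs j) y) y := by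
        intro y hy
        exact hdec y (by rwa [show 1 + (k-1) = k from by omega] at hy)
      have h2 := dn_congr (V := V) (m := 1) (s := k-1) hcong w hw
      rw [hdn] at h2
      rw [dn_iter_finsum (V := V) (k-1) (Finset.range (k+1))
        (fun j => up^[k-j] (hs j))] at h2
      have h2' : (0:ℚ) = ∑ j ∈ Finset.range (k+1), (dn V)^[k-1] (up^[k-j] (hs j)) w := h2
      -- h2 : 0 = Σ_j dn^[k-1] g_j w
      have hterm : ∀ j ∈ Finset.range (k+1), (dn V)^[k-1] (up^[k-j] (hs j)) w
          = (if j = 0 then βcoef V 0 (k-1) 1 * up^[1] (hs 0) w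
             else if j = 1 then βcoef V 1 (k-1) 0 * up^[0] (hs 1) w else 0) := by
        intro j hj
        rw [Finset.mem_range] at hj
        by_cases hj0 : j = 0
        · subst hj0
          rw [if_pos rfl]
          have hw' : w ∈ kslice V (0 + 1) := by rwa [show (0:ℕ) + 1 = 1 from rfl]
          have h3 := dn_iter_up_harm (hhs 0) (k-1) 1 w hw'
          rwa [show (k-1) + 1 = k - 0 from by omega] at h3
        · by_cases hj1 : j = 1
          · subst hj1
            rw [if_neg hj0, if_pos rfl]
            have hw' : w ∈ kslice V (1 + 0) := by rwa [show (1:ℕ) + 0 = 1 from rfl]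
            have h3 := dn_iter_up_harm (hhs 1) (k-1) 0 w hw'
            rwa [show (k-1) + 0 = k - 1 from by omega] at h3
          · rw [if_neg hj0, if_neg hj1]
            have hw' : w ∈ kslice V (k - (k-1)) := by
              rwa [show k - (k-1) = 1 from by omega]
            exact dn_iter_up_self_zero (V := V) k (j := j) (r := k-1)
              (by omega) (by omega) (by omega) (hhs j) w hw'
      rw [Finset.sum_congr rfl hterm] at h2'
      have hsplitsum : ∑ j ∈ Finset.range (k+1),
          (if j = 0 then βcoef V 0 (k-1) 1 * up^[1] (hs 0) w
           else if j = 1 then βcoef V 1 (k-1) 0 * up^[0] (hs 1) w else 0)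
          = βcoef V 0 (k-1) 1 * up^[1] (hs 0) w + βcoef V 1 (k-1) 0 * up^[0] (hs 1) w := by
        rw [show (∑ j ∈ Finset.range (k+1),
            (if j = 0 then βcoef V 0 (k-1) 1 * up^[1] (hs 0) w
             else if j = 1 then βcoef V 1 (k-1) 0 * up^[0] (hs 1) w else 0))
          = ∑ j ∈ Finset.range 2,
            (if j = 0 then βcoef V 0 (k-1) 1 * up^[1] (hs 0) w
             else if j = 1 then βcoef V 1 (k-1) 0 * up^[0] (hs 1) w else 0) from by
          symm
          refine Finset.sum_subset (fun r hr => by rw [Finset.mem_range] at *; omega) ?_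
          intro r _ hr2
          rw [Finset.mem_range] at hr2
          rw [if_neg (by omega), if_neg (by omega)]]
        rw [Finset.sum_range_succ, Finset.sum_range_one]
        norm_num
      rw [hsplitsum] at h2'
      linarith [h2']
    have h5 : ip V 1 (hs 1) (up (hs 0)) = 0 := by
      rw [ip_comm, show (1:ℕ) = 0 + 1 from rfl, ip_up_dn]
      refine Finset.sum_eq_zero fun w hw => ?_
      have hdn1 : dn V (hs 1) w = 0 := by
        refine hhs 1 w (Finset.mem_powerset.2 (mem_kslice.1 hw).1) ?_
        have := (mem_kslice.1 hw).2
        omega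
      rw [hdn1, mul_zero]
    have hpair : βcoef V 1 (k-1) 0 * ip V 1 (hs 1) (hs 1) = 0 := by
      have h3 : βcoef V 0 (k-1) 1 * ip V 1 (hs 1) (up (hs 0))
          + βcoef V 1 (k-1) 0 * ip V 1 (hs 1) (hs 1) = 0 := by
        unfold ip
        rw [Finset.mul_sum, Finset.mul_sum, ← Finset.sum_add_distrib]
        refine Finset.sum_eq_zero fun w hw => ?_
        have h4 := hw1 w hw
        calc βcoef V 0 (k-1) 1 * (hs 1 w * up (hs 0) w)
              + βcoef V 1 (k-1) 0 * (hs 1 w * hs 1 w)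
            = hs 1 w * (βcoef V 0 (k-1) 1 * up^[1] (hs 0) w
              + βcoef V 1 (k-1) 0 * up^[0] (hs 1) w) := by
              rw [Function.iterate_one, Function.iterate_zero_apply]
              ring
          _ = 0 := by rw [h4, mul_zero]
      rw [h5, mul_zero, zero_add] at h3
      exact h3
    have hβ1 : 0 < βcoef V 1 (k-1) 0 := βcoef_pos (by omega)
    have hip1 : ip V 1 (hs 1) (hs 1) = 0 := by
      rcases mul_eq_zero.1 hpair with h | h
      · exact absurd h (ne_of_gt hβ1)
      · exact h
    have hs1zero : ∀ w ∈ kslice V 1, hs 1 w = (0 : Finset α → ℚ) w := by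
      have hnn1 : ∀ w ∈ kslice V 1, 0 ≤ hs 1 w * hs 1 w := fun w _ => mul_self_nonneg _
      intro w hw
      have := (Finset.sum_eq_zero_iff_of_nonneg hnn1).1 hip1 w hw
      simpa using mul_self_eq_zero.1 this
    have hg1 : ∀ x ∈ kslice V k, up^[k-1] (hs 1) x = 0 := by
      intro x hx
      have h6 := up_congr (V := V) (m := 1) (s := k-1) hs1zero x
        (by rwa [show 1 + (k-1) = k from by omega])
      rw [h6, up_iter_zero]
      rfl
    unfold ip
    refine Finset.sum_eq_zero fun x hx => ?_
    rw [hg1 x hx, zero_mul]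
  -- combine
  have hfinal : ∀ j ∈ Finset.range (k+1),
      0 ≤ (8 * Λ j + C2) * ip V k (up^[k-j] (hs j)) (up^[k-j] (hs j)) := by
    intro j hj
    rw [Finset.mem_range] at hj
    by_cases hj1 : j = 1
    · subst hj1
      rw [nip1 (by omega), mul_zero]
    · refine mul_nonneg ?_ (hnn j)
      have hchoosepos : (0:ℚ) ≤ (((2*k-j).choose (k-j) : ℕ) : ℚ) := by positivity
      rcases Nat.even_or_odd j with he | ho
      · have : Λ j = (((2*k-j).choose (k-j) : ℕ) : ℚ) := by
          rw [hΛ]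
          simp only
          rw [Even.neg_one_pow he, one_mul]
        rw [this, hC2]
        positivity
      · have hj3 : 3 ≤ j := by
          obtain ⟨m, hm⟩ := ho
          omega
        have : Λ j = -(((2*k-j).choose (k-j) : ℕ) : ℚ) := by
          rw [hΛ]
          simp only
          rw [Odd.neg_one_pow ho]
          ring
        rw [this, hC2]
        have hb := choose_bound (k := k) (j := j) hj3 (by omega)
        have hbq : (8:ℚ) * (((2*k-j).choose (k-j) : ℕ) : ℚ) ≤ (((2*k).choose k : ℕ) : ℚ) := by
          exact_mod_cast hb
        linarith
  calc (0:ℚ) ≤ ∑ j ∈ Finset.range (k+1),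
        (8 * Λ j + C2) * ip V k (up^[k-j] (hs j)) (up^[k-j] (hs j)) :=
        Finset.sum_nonneg hfinal
    _ = 8 * (∑ j ∈ Finset.range (k+1), Λ j * ip V k (up^[k-j] (hs j)) (up^[k-j] (hs j)))
        + C2 * ∑ j ∈ Finset.range (k+1), ip V k (up^[k-j] (hs j)) (up^[k-j] (hs j)) := by
        rw [Finset.mul_sum, Finset.mul_sum, ← Finset.sum_add_distrib]
        exact Finset.sum_congr rfl fun j _ => by ring
    _ = _ := by rw [← hAuu, ← hipuu]

lemma mem_triples {k : ℕ} {q : Finset α × Finset α × Finset α} :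
    q ∈ triples V k k k ↔ (q.1 ⊆ V ∧ q.2.1 ⊆ V ∧ q.2.2 ⊆ V) ∧
      q.1.card = k ∧ q.2.1.card = k ∧ q.2.2.card = k ∧
      Disjoint q.1 q.2.1 ∧ Disjoint q.1 q.2.2 ∧ Disjoint q.2.1 q.2.2 ∧
      q.1 ∪ q.2.1 ∪ q.2.2 = V := by
  unfold triples
  rw [Finset.mem_filter, Finset.mem_product, Finset.mem_product,
    Finset.mem_powerset, Finset.mem_powerset, Finset.mem_powerset]

lemma sum_T (k : ℕ) (hV : V.card = 3*k) (ψ : Finset α × Finset α × Finset α → ℚ) :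
    ∑ q ∈ triples V k k k, ψ q
      = ∑ x ∈ kslice V k, ∑ y ∈ kslice (V \ x) k, ψ (x, y, V \ (x ∪ y)) := by
  rw [Finset.sum_sigma' (kslice V k) (fun x => kslice (V \ x) k)
    (fun x y => ψ (x, y, V \ (x ∪ y)))]
  refine Finset.sum_nbij' (fun q => ⟨q.1, q.2.1⟩) (fun q => (q.1, q.2, V \ (q.1 ∪ q.2)))
    ?_ ?_ ?_ ?_ ?_
  · rintro ⟨a, b, c⟩ hq
    rw [mem_triples] at hq
    obtain ⟨⟨s1, s2, s3⟩, c1, c2, c3, d12, d13, d23, hU⟩ := hq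
    rw [Finset.mem_sigma]
    exact ⟨mem_kslice.2 ⟨s1, c1⟩, mem_kslice.2 ⟨Finset.subset_sdiff.2 ⟨s2, d12.symm⟩, c2⟩⟩
  · rintro ⟨x, y⟩ hq
    rw [Finset.mem_sigma] at hq
    obtain ⟨hx, hy⟩ := hq
    obtain ⟨hxV, hxc⟩ := mem_kslice.1 hx
    obtain ⟨hyVx, hyc⟩ := mem_kslice.1 hy
    obtain ⟨hyV, hyx⟩ := Finset.subset_sdiff.1 hyVx
    have hxyV : x ∪ y ⊆ V := Finset.union_subset hxV hyV
    have hcard : (x ∪ y).card = 2*k := by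
      rw [Finset.card_union_of_disjoint hyx.symm, hxc, hyc]
      omega
    rw [mem_triples]
    refine ⟨⟨hxV, hyV, Finset.sdiff_subset⟩, hxc, hyc, ?_, hyx.symm, ?_, ?_, ?_⟩
    · rw [Finset.card_sdiff_of_subset hxyV, hV, hcard]
      omega
    · exact Finset.disjoint_of_subset_left Finset.subset_union_left (Finset.disjoint_sdiff)
    · exact Finset.disjoint_of_subset_left Finset.subset_union_right (Finset.disjoint_sdiff)
    · exact Finset.union_sdiff_of_subset hxyV
  · rintro ⟨a, b, c⟩ hq
    rw [mem_triples] at hq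
    obtain ⟨⟨s1, s2, s3⟩, c1, c2, c3, d12, d13, d23, hU⟩ := hq
    have hc : V \ (a ∪ b) = c := by
      ext i
      rw [Finset.mem_sdiff, Finset.mem_union]
      constructor
      · rintro ⟨hiV, hnot⟩
        rw [← hU] at hiV
        rcases Finset.mem_union.1 hiV with h | h
        · rcases Finset.mem_union.1 h with h' | h'
          · exact absurd (Or.inl h') hnot
          · exact absurd (Or.inr h') hnot
        · exact h
      · intro hic
        refine ⟨by rw [← hU]; exact Finset.mem_union_right _ hic, ?_⟩
        rintro (h | h)
        · exact (Finset.disjoint_left.1 d13) h hic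
        · exact (Finset.disjoint_left.1 d23) h hic
    simp only [Prod.mk.injEq]
    exact ⟨trivial, trivial, hc⟩
  · rintro ⟨x, y⟩ _
    rfl
  · rintro ⟨a, b, c⟩ hq
    rw [mem_triples] at hq
    obtain ⟨⟨s1, s2, s3⟩, c1, c2, c3, d12, d13, d23, hU⟩ := hq
    have hc : V \ (a ∪ b) = c := by
      ext i
      rw [Finset.mem_sdiff, Finset.mem_union]
      constructor
      · rintro ⟨hiV, hnot⟩
        rw [← hU] at hiV
        rcases Finset.mem_union.1 hiV with h | h
        · rcases Finset.mem_union.1 h with h' | h'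
          · exact absurd (Or.inl h') hnot
          · exact absurd (Or.inr h') hnot
        · exact h
      · intro hic
        refine ⟨by rw [← hU]; exact Finset.mem_union_right _ hic, ?_⟩
        rintro (h | h)
        · exact (Finset.disjoint_left.1 d13) h hic
        · exact (Finset.disjoint_left.1 d23) h hic
    show ψ (a, b, c) = ψ (a, b, V \ (a ∪ b))
    rw [hc]

lemma sum_T_cyc (k : ℕ) (ψ : Finset α × Finset α × Finset α → ℚ) :
    ∑ q ∈ triples V k k k, ψ (q.2.1, q.2.2, q.1) = ∑ q ∈ triples V k k k, ψ q := by
  refine Finset.sum_nbij' (fun q => (q.2.1, q.2.2, q.1)) (fun q => (q.2.2, q.1, q.2.1))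
    ?_ ?_ ?_ ?_ ?_
  · rintro ⟨a, b, c⟩ hq
    rw [mem_triples] at hq ⊢
    obtain ⟨⟨s1, s2, s3⟩, c1, c2, c3, d12, d13, d23, hU⟩ := hq
    refine ⟨⟨s2, s3, s1⟩, c2, c3, c1, d23, d12.symm, d13.symm, ?_⟩
    rw [← hU]
    ext i
    simp only [Finset.mem_union]
    tauto
  · rintro ⟨a, b, c⟩ hq
    rw [mem_triples] at hq ⊢
    obtain ⟨⟨s1, s2, s3⟩, c1, c2, c3, d12, d13, d23, hU⟩ := hq
    refine ⟨⟨s3, s1, s2⟩, c3, c1, c2, d13.symm, d23.symm, d12, ?_⟩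
    rw [← hU]
    ext i
    simp only [Finset.mem_union]
    tauto
  · rintro ⟨a, b, c⟩ _
    rfl
  · rintro ⟨a, b, c⟩ _
    rfl
  · rintro ⟨a, b, c⟩ _
    rfl

lemma sum_pair_swap (k : ℕ) (G : Finset α → Finset α → ℚ) :
    ∑ x ∈ kslice V k, ∑ y ∈ kslice (V \ x) k, G x y
      = ∑ x ∈ kslice V k, ∑ y ∈ kslice (V \ x) k, G y x := by
  rw [Finset.sum_sigma' (kslice V k) (fun x => kslice (V \ x) k) (fun x y => G x y),
    Finset.sum_sigma' (kslice V k) (fun x => kslice (V \ x) k) (fun x y => G y x)]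
  refine Finset.sum_nbij' (fun q => ⟨q.2, q.1⟩) (fun q => ⟨q.2, q.1⟩) ?_ ?_ ?_ ?_ ?_
  · rintro ⟨x, y⟩ hq
    rw [Finset.mem_sigma] at hq ⊢
    obtain ⟨hx, hy⟩ := hq
    obtain ⟨hxV, hxc⟩ := mem_kslice.1 hx
    obtain ⟨hyVx, hyc⟩ := mem_kslice.1 hy
    obtain ⟨hyV, hyx⟩ := Finset.subset_sdiff.1 hyVx
    exact ⟨mem_kslice.2 ⟨hyV, hyc⟩, mem_kslice.2 ⟨Finset.subset_sdiff.2 ⟨hxV, hyx.symm⟩, hxc⟩⟩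
  · rintro ⟨x, y⟩ hq
    rw [Finset.mem_sigma] at hq ⊢
    obtain ⟨hx, hy⟩ := hq
    obtain ⟨hxV, hxc⟩ := mem_kslice.1 hx
    obtain ⟨hyVx, hyc⟩ := mem_kslice.1 hy
    obtain ⟨hyV, hyx⟩ := Finset.subset_sdiff.1 hyVx
    exact ⟨mem_kslice.2 ⟨hyV, hyc⟩, mem_kslice.2 ⟨Finset.subset_sdiff.2 ⟨hxV, hyx.symm⟩, hxc⟩⟩
  · rintro ⟨x, y⟩ _
    rfl
  · rintro ⟨x, y⟩ _
    rfl
  · rintro ⟨x, y⟩ _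
    rfl

lemma egal_dn (k : ℕ) (hV : V.card = 3*k) (hk : 1 ≤ k) (g : Finset α → Bool)
    (hg : Egalitarian V k g) (p : ℚ)
    (hp : p * ((kslice V k).card : ℚ)
      = (((kslice V k).filter (fun x => g x = true)).card : ℚ)) :
    ∀ w ∈ kslice V 1, (dn V)^[k-1] (fun x => (if g x = true then (1:ℚ) else 0) - p) w = 0 := by
  intro w hw
  obtain ⟨hwV, hwc⟩ := mem_kslice.1 hw
  obtain ⟨i, rfl⟩ := Finset.card_eq_one.1 hwc
  have hiV : i ∈ V := hwV (Finset.mem_singleton_self i)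
  rw [dn_iter_eq]
  have hdouble : V.card * ((kslice V k).filter (fun x => i ∈ x ∧ g x = true)).card
      = k * ((kslice V k).filter (fun x => g x = true)).card := by
    have hcnt : ∀ i' ∈ V, (((kslice V k).filter (fun x => i' ∈ x ∧ g x = true)).card)
        = ((kslice V k).filter (fun x => i ∈ x ∧ g x = true)).card :=
      fun i' hi' => hg i' hi' i hiV
    have h1 : ∑ i' ∈ V, ((kslice V k).filter (fun x => i' ∈ x ∧ g x = true)).card
        = V.card * ((kslice V k).filter (fun x => i ∈ x ∧ g x = true)).card := by
      rw [Finset.sum_congr rfl hcnt, Finset.sum_const, smul_eq_mul]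
    rw [← h1]
    have h2 : ∀ i' ∈ V, ((kslice V k).filter (fun x => i' ∈ x ∧ g x = true)).card
        = ∑ x ∈ kslice V k, if (i' ∈ x ∧ g x = true) then 1 else 0 := by
      intro i' _
      rw [Finset.card_filter]
    rw [Finset.sum_congr rfl h2]
    rw [show (∑ i' ∈ V, ∑ x ∈ kslice V k, if (i' ∈ x ∧ g x = true) then 1 else 0)
        = ∑ x ∈ kslice V k, ∑ i' ∈ V, if (i' ∈ x ∧ g x = true) then 1 else 0
      from Finset.sum_comm]
    have h3 : ∀ x ∈ kslice V k, (∑ i' ∈ V, if (i' ∈ x ∧ g x = true) then 1 else 0)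
        = k * (if g x = true then 1 else 0) := by
      intro x hx
      obtain ⟨hxV, hxc⟩ := mem_kslice.1 hx
      by_cases hgx : g x = true
      · simp only [hgx, and_true, if_true, mul_one]
        rw [← Finset.card_filter, Finset.filter_mem_eq_inter, Finset.inter_eq_right.2 hxV, hxc]
      · simp [hgx]
    rw [Finset.sum_congr rfl h3, ← Finset.mul_sum, ← Finset.card_filter]
  have hfirst : ∑ z ∈ (V \ {i}).powersetCard (k-1),
      (if g ({i} ∪ z) = true then (1:ℚ) else 0)
      = ((((kslice V k).filter (fun x => i ∈ x ∧ g x = true)).card : ℕ) : ℚ) := by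
    have hstep1 : ∑ z ∈ (V \ {i}).powersetCard (k-1),
        (if g ({i} ∪ z) = true then (1:ℚ) else 0)
        = ∑ x ∈ (kslice V k).filter (fun x => i ∈ x), (if g x = true then (1:ℚ) else 0) := by
      refine Finset.sum_nbij' (fun z => insert i z) (fun x => x.erase i) ?_ ?_ ?_ ?_ ?_
      · intro z hz
        rw [Finset.mem_powersetCard] at hz
        obtain ⟨hzV, hzc⟩ := hz
        obtain ⟨hzV', hzi⟩ := Finset.subset_sdiff.1 hzV
        have hiz : i ∉ z := by
          intro hmem
          exact (Finset.disjoint_left.1 hzi) hmem (Finset.mem_singleton_self i)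
        rw [Finset.mem_filter]
        refine ⟨mem_kslice.2 ⟨Finset.insert_subset hiV hzV', ?_⟩, Finset.mem_insert_self _ _⟩
        rw [Finset.card_insert_of_notMem hiz, hzc]
        omega
      · intro x hx
        rw [Finset.mem_filter] at hx
        obtain ⟨hxk, hix⟩ := hx
        obtain ⟨hxV, hxc⟩ := mem_kslice.1 hxk
        rw [Finset.mem_powersetCard]
        constructor
        · rw [Finset.subset_sdiff]
          refine ⟨(Finset.erase_subset _ _).trans hxV, ?_⟩
          rw [Finset.disjoint_singleton_right]
          exact Finset.notMem_erase _ _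
        · rw [Finset.card_erase_of_mem hix, hxc]
      · intro z hz
        rw [Finset.mem_powersetCard] at hz
        obtain ⟨hzV, _⟩ := hz
        obtain ⟨_, hzi⟩ := Finset.subset_sdiff.1 hzV
        refine Finset.erase_insert ?_
        intro hmem
        exact (Finset.disjoint_left.1 hzi) hmem (Finset.mem_singleton_self i)
      · intro x hx
        rw [Finset.mem_filter] at hx
        exact Finset.insert_erase hx.2
      · intro z _
        have : ({i} : Finset α) ∪ z = insert i z := by
          ext a; simp [Finset.mem_union, Finset.mem_insert]
        rw [this]
    rw [hstep1, Finset.sum_boole, Finset.filter_filter]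
  have hVi : (V \ {i}).card = 3*k - 1 := by
    rw [Finset.card_sdiff_of_subset (by simpa using hiV), hV, Finset.card_singleton]
  rw [Finset.sum_sub_distrib, Finset.sum_const, nsmul_eq_mul, Finset.card_powersetCard, hVi,
    hfirst]
  -- now: cnt - C(3k-1,k-1) * p = 0 (then times (k-1)! )
  have hchooseid : (3*k) * ((3*k-1).choose (k-1)) = ((3*k).choose k) * k := by
    have h4 := Nat.add_one_mul_choose_eq (3*k-1) (k-1)
    rw [show 3*k-1+1 = 3*k from by omega, show k-1+1 = k from by omega] at h4
    exact h4
  have h3kne : ((3*k : ℕ) : ℚ) ≠ 0 := Nat.cast_ne_zero.2 (by omega)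
  have hdq : ((3*k : ℕ) : ℚ) * ((((kslice V k).filter (fun x => i ∈ x ∧ g x = true)).card : ℕ) : ℚ)
      = ((k : ℕ) : ℚ) * ((((kslice V k).filter (fun x => g x = true)).card : ℕ) : ℚ) := by
    rw [hV] at hdouble
    exact_mod_cast congrArg (fun n : ℕ => (n : ℚ)) hdouble
  have hcq : ((3*k : ℕ) : ℚ) * (((3*k-1).choose (k-1) : ℕ) : ℚ)
      = (((3*k).choose k : ℕ) : ℚ) * ((k : ℕ) : ℚ) := by
    exact_mod_cast congrArg (fun n : ℕ => (n : ℚ)) hchooseid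
  have hNq : ((kslice V k).card : ℚ) = (((3*k).choose k : ℕ) : ℚ) := by
    rw [card_kslice, hV]
  have hzero : ((((kslice V k).filter (fun x => i ∈ x ∧ g x = true)).card : ℕ) : ℚ)
      - (((3*k-1).choose (k-1) : ℕ) : ℚ) * p = 0 := by
    have hmul : ((3*k : ℕ) : ℚ) * (((((kslice V k).filter (fun x => i ∈ x ∧ g x = true)).card : ℕ) : ℚ)
        - (((3*k-1).choose (k-1) : ℕ) : ℚ) * p) = 0 := by
      rw [mul_sub, hdq, ← mul_assoc, hcq]
      rw [hNq] at hp
      calc ((k : ℕ) : ℚ) * ((((kslice V k).filter (fun x => g x = true)).card : ℕ) : ℚ)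
            - (((3*k).choose k : ℕ) : ℚ) * ((k : ℕ) : ℚ) * p
          = ((k : ℕ) : ℚ) * (((((kslice V k).filter (fun x => g x = true)).card : ℕ) : ℚ)
            - p * (((3*k).choose k : ℕ) : ℚ)) := by ring
        _ = 0 := by rw [← hp, sub_self, mul_zero]
    rcases mul_eq_zero.1 hmul with h | h
    · exact absurd h h3kne
    · exact h
  rw [hzero, mul_zero]

lemma bool_ind (a b c : Bool) :
    (if (a = b ∧ b = c) then (1:ℚ) else 0)
      = 1 - ((if a = b then (0:ℚ) else 1) + (if b = c then (0:ℚ) else 1)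
          + (if a = c then (0:ℚ) else 1))/2 := by
  cases a <;> cases b <;> cases c <;> norm_num

lemma bool_delta (a b : Bool) :
    (if a = b then (0:ℚ) else 1)
      = (if a = true then (1:ℚ) else 0) + (if b = true then (1:ℚ) else 0)
        - 2*((if a = true then (1:ℚ) else 0) * (if b = true then (1:ℚ) else 0)) := by
  cases a <;> cases b <;> norm_num

lemma bool_delta_symm (a b : Bool) :
    (if a = b then (0:ℚ) else 1) = (if b = a then (0:ℚ) else 1) :=
  if_congr eq_comm rfl rfl

end Slice

set_option linter.unusedSectionVars false

set_option maxHeartbeats 1000000 in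
open Slice in
theorem stmt10 (k : ℕ) (V : Finset α) (hV : V.card = 3 * k)
    (g : Finset α → Bool) (hg : Egalitarian V k g) :
    let S := kslice V k
    let T := triples V k k k
    let p : ℚ := ((S.filter (fun x => g x = true)).card : ℚ) / S.card
    let PA : ℚ :=
      ((T.filter (fun q => g q.1 = g q.2.1 ∧ g q.2.1 = g q.2.2)).card : ℚ) / T.card
    PA ≥ (8 - 27 * p + 27 * p ^ 2) / 8 ∧ PA ≥ 5 / 32 := by
  intro S T p PA
  have hT : T = triples V k k k := rfl
  set N : ℚ := ((kslice V k).card : ℚ) with hN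
  set Fc : ℚ := (((kslice V k).filter (fun x => g x = true)).card : ℚ) with hFcdef
  have hNnat : 0 < (kslice V k).card := by
    rw [Slice.card_kslice, hV]
    exact Nat.choose_pos (by omega)
  have hNpos : 0 < N := by rw [hN]; exact_mod_cast hNnat
  have hpval : p = Fc / N := rfl
  have hFc : p * N = Fc := by
    rw [hpval]
    field_simp
  set C2 : ℚ := (((2*k).choose k : ℕ) : ℚ) with hC2def
  have hC2pos : (0:ℚ) < C2 := by
    rw [hC2def]
    exact_mod_cast Nat.choose_pos (by omega)
  set f0 : Finset α → ℚ := fun x => if g x = true then (1:ℚ) else 0 with hf0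
  set uu : Finset α → ℚ := fun x => f0 x - p with huu
  have hinner : ∀ x ∈ kslice V k, ((kslice (V \ x) k).card : ℚ) = C2 := by
    intro x hx
    rw [Slice.card_kslice, Finset.card_sdiff_of_subset (Slice.mem_kslice.1 hx).1, hV,
      (Slice.mem_kslice.1 hx).2, show 3*k - k = 2*k from by omega, hC2def]
  have hsum_f0 : ∑ x ∈ kslice V k, f0 x = Fc := by
    rw [hf0, hFcdef]
    exact Finset.sum_boole _ _
  have hsum_u : ∑ x ∈ kslice V k, uu x = 0 := by
    have h1 : ∀ x ∈ kslice V k, uu x = f0 x - p := fun x _ => rfl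
    rw [Finset.sum_congr rfl h1, Finset.sum_sub_distrib, hsum_f0, Finset.sum_const,
      nsmul_eq_mul, ← hN]
    linarith [hFc]
  have hsum_usq : ∑ x ∈ kslice V k, uu x * uu x = p*N - p^2*N := by
    have hterm : ∀ x ∈ kslice V k, uu x * uu x = f0 x - 2*p*(f0 x) + p^2 := by
      intro x _
      show (f0 x - p) * (f0 x - p) = _
      have h2 : f0 x * f0 x = f0 x := by
        rw [hf0]
        by_cases hgx : g x = true <;> simp [hgx]
      nlinarith [h2]
    rw [Finset.sum_congr rfl hterm, Finset.sum_add_distrib, Finset.sum_sub_distrib, hsum_f0,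
      ← Finset.mul_sum, hsum_f0, Finset.sum_const, nsmul_eq_mul, ← hN, ← hFc]
    ring
  have hA0sum : ∑ x ∈ kslice V k, A0 V k uu x = 0 := by
    have h1 : ∑ x ∈ kslice V k, A0 V k uu x
        = ∑ x ∈ kslice V k, ∑ y ∈ kslice (V \ x) k, uu y := rfl
    rw [h1, Slice.sum_pair_swap (V := V) k (fun x y => uu y)]
    have h2 : ∀ x ∈ kslice V k, (∑ y ∈ kslice (V \ x) k, uu x) = C2 * uu x := by
      intro x hx
      rw [Finset.sum_const, nsmul_eq_mul, hinner x hx]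
    rw [Finset.sum_congr rfl h2, ← Finset.mul_sum, hsum_u, mul_zero]
  have hA0f0 : ∀ x ∈ kslice V k, A0 V k f0 x = A0 V k uu x + p * C2 := by
    intro x hx
    show (∑ y ∈ kslice (V \ x) k, f0 y) = (∑ y ∈ kslice (V \ x) k, uu y) + p * C2
    have h1 : ∀ y ∈ kslice (V \ x) k, f0 y = uu y + p := by
      intro y _
      show f0 y = (f0 y - p) + p
      ring
    rw [Finset.sum_congr rfl h1, Finset.sum_add_distrib, Finset.sum_const, nsmul_eq_mul,
      hinner x hx]
    ring
  set Auu : ℚ := ∑ x ∈ kslice V k, uu x * A0 V k uu x with hAuu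
  set m0 : ℚ := ∑ x ∈ kslice V k, f0 x * A0 V k f0 x with hm0def
  have hm0 : m0 = Auu + p^2 * N * C2 := by
    rw [hm0def, hAuu]
    have hterm : ∀ x ∈ kslice V k, f0 x * A0 V k f0 x
        = uu x * A0 V k uu x + p * A0 V k uu x + p*C2*(uu x) + p^2*C2 := by
      intro x hx
      have h2 := hA0f0 x hx
      have h3 : f0 x = uu x + p := by
        show f0 x = (f0 x - p) + p
        ring
      rw [h3, h2]
      ring
    rw [Finset.sum_congr rfl hterm, Finset.sum_add_distrib, Finset.sum_add_distrib,
      Finset.sum_add_distrib, ← Finset.mul_sum, ← Finset.mul_sum, hA0sum, hsum_u,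
      Finset.sum_const, nsmul_eq_mul, ← hN]
    ring
  have hu : ∀ w ∈ kslice V 1, (dn V)^[k-1] uu w = 0 := by
    rcases Nat.eq_zero_or_pos k with hk0 | hk1
    · intro w hw
      exfalso
      obtain ⟨hwV, hwc⟩ := Slice.mem_kslice.1 hw
      have := Finset.card_le_card hwV
      omega
    · have h5 := Slice.egal_dn (V := V) k hV hk1 g hg p (by rw [← hN, ← hFcdef]; exact hFc)
      intro w hw
      have h6 : uu = fun x => (if g x = true then (1:ℚ) else 0) - p := by
        rw [huu, hf0]
      rw [h6]
      exact h5 w hw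
  have hspec := Slice.spectral (V := V) k hV uu hu
  rw [← hAuu, ← hC2def, hsum_usq] at hspec
  have hTcard : ((triples V k k k).card : ℚ) = N * C2 := by
    have h1 : ((triples V k k k).card : ℚ) = ∑ q ∈ triples V k k k, (1:ℚ) := by
      rw [Finset.card_eq_sum_ones]
      push_cast
      rfl
    rw [h1, Slice.sum_T (V := V) k hV (fun _ => 1)]
    have h2 : ∀ x ∈ kslice V k, (∑ y ∈ kslice (V \ x) k, (1:ℚ)) = C2 := by
      intro x hx
      rw [Finset.sum_const, nsmul_eq_mul, mul_one]
      exact hinner x hx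
    rw [Finset.sum_congr rfl h2, Finset.sum_const, nsmul_eq_mul, ← hN]
  set Dq : ℚ := ∑ q ∈ triples V k k k, (if g q.1 = g q.2.1 then (0:ℚ) else 1) with hDq
  have hNA : ((T.filter (fun q => g q.1 = g q.2.1 ∧ g q.2.1 = g q.2.2)).card : ℚ)
      = N*C2 - (3/2) * Dq := by
    have h1 : ((T.filter (fun q => g q.1 = g q.2.1 ∧ g q.2.1 = g q.2.2)).card : ℚ)
        = ∑ q ∈ triples V k k k,
            (if (g q.1 = g q.2.1 ∧ g q.2.1 = g q.2.2) then (1:ℚ) else 0) := by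
      rw [hT]
      exact Eq.symm (Finset.sum_boole _ _)
    have hpoint : ∀ q ∈ triples V k k k,
        (if (g q.1 = g q.2.1 ∧ g q.2.1 = g q.2.2) then (1:ℚ) else 0)
        = 1 - ((if g q.1 = g q.2.1 then (0:ℚ) else 1) + (if g q.2.1 = g q.2.2 then (0:ℚ) else 1)
            + (if g q.1 = g q.2.2 then (0:ℚ) else 1))/2 :=
      fun q _ => Slice.bool_ind (g q.1) (g q.2.1) (g q.2.2)
    have hc1 : ∑ q ∈ triples V k k k, (if g q.2.1 = g q.2.2 then (0:ℚ) else 1) = Dq := by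
      rw [hDq]
      exact Slice.sum_T_cyc (V := V) k (fun q => if g q.1 = g q.2.1 then (0:ℚ) else 1)
    have hc2 : ∑ q ∈ triples V k k k, (if g q.1 = g q.2.2 then (0:ℚ) else 1) = Dq := by
      have h3 := Slice.sum_T_cyc (V := V) k (fun q => if g q.2.2 = g q.1 then (0:ℚ) else 1)
      have h4 : ∑ q ∈ triples V k k k, (if g q.2.2 = g q.1 then (0:ℚ) else 1)
          = ∑ q ∈ triples V k k k, (if g q.1 = g q.2.2 then (0:ℚ) else 1) :=
        Finset.sum_congr rfl fun q _ => Slice.bool_delta_symm _ _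
      rw [← h4, ← h3, hDq]
    rw [h1, Finset.sum_congr rfl hpoint, Finset.sum_sub_distrib]
    have h5 : ∑ q ∈ triples V k k k, (1:ℚ) = N * C2 := by
      rw [← hTcard, Finset.sum_const, nsmul_eq_mul, mul_one]
    have h6 : ∑ q ∈ triples V k k k,
        ((if g q.1 = g q.2.1 then (0:ℚ) else 1) + (if g q.2.1 = g q.2.2 then (0:ℚ) else 1)
            + (if g q.1 = g q.2.2 then (0:ℚ) else 1))/2
        = (Dq + Dq + Dq)/2 := by
      rw [← Finset.sum_div, Finset.sum_add_distrib, Finset.sum_add_distrib, hc1, hc2, ← hDq]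
    rw [h5, h6]
    ring
  have hD : Dq = 2*(p*N)*C2 - 2*m0 := by
    rw [hDq, Slice.sum_T (V := V) k hV (fun q => if g q.1 = g q.2.1 then (0:ℚ) else 1)]
    have hpt : ∀ x ∈ kslice V k, (∑ y ∈ kslice (V \ x) k, (if g x = g y then (0:ℚ) else 1))
        = C2 * f0 x + A0 V k f0 x - (2*f0 x) * A0 V k f0 x := by
      intro x hx
      have h7 : ∀ y ∈ kslice (V \ x) k, (if g x = g y then (0:ℚ) else 1)
          = f0 x + f0 y - (2 * f0 x) * f0 y := by
        intro y _
        rw [hf0]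
        simp only
        rw [Slice.bool_delta (g x) (g y)]
        ring
      rw [Finset.sum_congr rfl h7, Finset.sum_sub_distrib, Finset.sum_add_distrib,
        Finset.sum_const, nsmul_eq_mul, hinner x hx, ← Finset.mul_sum]
      rfl
    rw [Finset.sum_congr rfl hpt, Finset.sum_sub_distrib, Finset.sum_add_distrib,
      ← Finset.mul_sum, hsum_f0]
    have h8 : ∑ x ∈ kslice V k, A0 V k f0 x = (p*N) * C2 := by
      rw [Finset.sum_congr rfl hA0f0, Finset.sum_add_distrib, hA0sum, Finset.sum_const,
        nsmul_eq_mul, ← hN]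
      ring
    have h9 : ∑ x ∈ kslice V k, (2*f0 x) * A0 V k f0 x = 2 * m0 := by
      have h10 : ∀ x ∈ kslice V k, (2*f0 x) * A0 V k f0 x = 2*(f0 x * A0 V k f0 x) :=
        fun x _ => by ring
      rw [Finset.sum_congr rfl h10, ← Finset.mul_sum, ← hm0def]
    rw [h8, h9, ← hFc]
    ring
  have hNC2pos : 0 < N * C2 := mul_pos hNpos hC2pos
  have hkey : ((T.filter (fun q => g q.1 = g q.2.1 ∧ g q.2.1 = g q.2.2)).card : ℚ)
      ≥ (8 - 27*p + 27*p^2)/8 * (N * C2) := by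
    rw [hNA]
    nlinarith [hspec, hD, hm0]
  have hPA : PA = ((T.filter (fun q => g q.1 = g q.2.1 ∧ g q.2.1 = g q.2.2)).card : ℚ)
      / ((triples V k k k).card : ℚ) := rfl
  constructor
  · rw [ge_iff_le, hPA, hTcard, le_div_iff₀ hNC2pos]
    linarith [hkey]
  · rw [ge_iff_le, hPA, hTcard, le_div_iff₀ hNC2pos]
    have h5 : (5:ℚ)/32 ≤ (8 - 27*p + 27*p^2)/8 := by nlinarith [sq_nonneg (2*p - 1)]
    have h6 : (5:ℚ)/32 * (N*C2) ≤ (8 - 27*p + 27*p^2)/8 * (N*C2) :=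
      mul_le_mul_of_nonneg_right h5 (le_of_lt hNC2pos)
    linarith [hkey]
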